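/- arXiv:2206.06889 — 2 statements merged into one kernel-verified Lean document; each statement's English description precedes it below -/
import Mathlib

section
/- Let ℓ ≥ 2, J ⊆ ℤ/ℓℤ, and let θ ∈ ℂ^(ℤ/ℓℤ) be J-standard with Σ_{i ∈ ℤ/ℓℤ} θ_i ≠ 0. If the partition μ is a J-core, then the framed θ-representation A_μ is simple. -/
namespace CM

/-- The (non-linear) action of the simple reflection `s_j` on `ℤ^(ℤ/ℓℤ)`. -/
def sInt (ℓ : ℕ) (j : ZMod ℓ) (d : ZMod ℓ → ℤ) : ZMod ℓ → ℤ := fun i =>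
  if i = j then (if j = 0 then 1 else 0) + d (j + 1) + d (j - 1) - d j else d i

/-- The linear action of the simple reflection `s_j` on `ℂ^(ℤ/ℓℤ)`.
For `i ≠ j` the coefficient of `θ j` is the number of arrows between `i` and `j`
(which is `2` when `ℓ = 2`). -/
def sC (ℓ : ℕ) (j : ZMod ℓ) (θ : ZMod ℓ → ℂ) : ZMod ℓ → ℂ := fun i =>
  if i = j then -θ j
  else θ i + ((if i = j - 1 then 1 else 0) + (if i = j + 1 then 1 else 0) : ℂ) * θ j

lemma sC_sC (ℓ : ℕ) (j : ZMod ℓ) (θ : ZMod ℓ → ℂ) : sC ℓ j (sC ℓ j θ) = θ := by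
  funext i
  by_cases h : i = j
  · subst h; simp [sC]
  · simp [sC, h]

/-- `s_j` as a bijection of `ℂ^(ℤ/ℓℤ)`. -/
def sPerm (ℓ : ℕ) (j : ZMod ℓ) : Equiv.Perm (ZMod ℓ → ℂ) :=
  ⟨sC ℓ j, sC ℓ j, fun θ => sC_sC ℓ j θ, fun θ => sC_sC ℓ j θ⟩

/-- The group generated by the operators `s_j`, `j ∈ ℤ/ℓℤ`. -/
def Wgrp (ℓ : ℕ) : Subgroup (Equiv.Perm (ZMod ℓ → ℂ)) :=
  Subgroup.closure (Set.range (sPerm ℓ))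

/-- The subgroup generated by the operators `s_j`, `j ∈ J`. -/
def WJ (ℓ : ℕ) (J : Set (ZMod ℓ)) : Subgroup (Equiv.Perm (ZMod ℓ → ℂ)) :=
  Subgroup.closure (sPerm ℓ '' J)

/-- `θ` is `J`-standard if its stabilizer in `W` is exactly `W_J`. -/
def JStandard (ℓ : ℕ) (J : Set (ZMod ℓ)) (θ : ZMod ℓ → ℂ) : Prop :=
  ∀ w ∈ Wgrp ℓ, ((w : (ZMod ℓ → ℂ) → (ZMod ℓ → ℂ)) θ = θ ↔ w ∈ WJ ℓ J)

/-- The `∞`-residue of a box. -/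
def rsd (c : ℕ × ℕ) : ℤ := (c.2 : ℤ) - (c.1 : ℤ)

/-- The `ℓ`-residue of a box. -/
def res (ℓ : ℕ) (c : ℕ × ℕ) : ZMod ℓ := (rsd c : ZMod ℓ)

/-- `Res_ℓ(μ) ∈ ℤ^(ℤ/ℓℤ)`: the number of boxes of each `ℓ`-residue. -/
def Res (ℓ : ℕ) (μ : YoungDiagram) : ZMod ℓ → ℤ := fun i =>
  ((μ.cells.filter (fun c => res ℓ c = i)).card : ℤ)

/-- The constant vector `δ_ℓ = (1,…,1)`. -/
def delta (ℓ : ℕ) : ZMod ℓ → ℤ := fun _ => 1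

/-- A box is removable if deleting it leaves a Young diagram. -/
def IsRemovable (μ : YoungDiagram) (c : ℕ × ℕ) : Prop :=
  c ∈ μ.cells ∧ ∃ ν : YoungDiagram, ν.cells = μ.cells.erase c

/-- A box is addable if adjoining it yields a Young diagram. -/
def IsAddable (μ : YoungDiagram) (c : ℕ × ℕ) : Prop :=
  c ∉ μ.cells ∧ ∃ ν : YoungDiagram, ν.cells = insert c μ.cells

/-- One step: delete one removable box. -/
def RemoveStep (μ ν : YoungDiagram) : Prop :=
  ∃ c, IsRemovable μ c ∧ ν.cells = μ.cells.erase c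

/-- `ν` is obtainable from `μ` by successively deleting removable boxes. -/
def Obtainable (μ ν : YoungDiagram) : Prop :=
  Relation.ReflTransGen RemoveStep μ ν

/-- `λ` is an `ℓ`-core: no partition obtainable from `λ` by deleting removable boxes
differs from `λ` by exactly `ℓ` boxes of pairwise distinct `ℓ`-residues. -/
def IsCore (ℓ : ℕ) (lam : YoungDiagram) : Prop :=
  ¬ ∃ μ : YoungDiagram, Obtainable lam μ ∧ (lam.cells \ μ.cells).card = ℓ ∧
      Set.InjOn (res ℓ) ↑(lam.cells \ μ.cells)

/-- One step of the `ℓ`-core process: delete (via removable-box deletions) `ℓ` boxes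
of pairwise distinct `ℓ`-residues. -/
def CoreStep (ℓ : ℕ) (μ ν : YoungDiagram) : Prop :=
  Obtainable μ ν ∧ (μ.cells \ ν.cells).card = ℓ ∧
    Set.InjOn (res ℓ) ↑(μ.cells \ ν.cells)

/-- `ν` is the `ℓ`-core of `λ`: it is an `ℓ`-core reached from `λ` by the core process. -/
def ReachesCore (ℓ : ℕ) (lam ν : YoungDiagram) : Prop :=
  Relation.ReflTransGen (CoreStep ℓ) lam ν ∧ IsCore ℓ ν

/-- A `J`-removable box: a removable box whose `ℓ`-residue lies in `J`. -/
def IsJRemovable (ℓ : ℕ) (J : Set (ZMod ℓ)) (μ : YoungDiagram) (c : ℕ × ℕ) : Prop :=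
  IsRemovable μ c ∧ res ℓ c ∈ J

/-- A `J`-core: a partition with no `J`-removable boxes. -/
def IsJCore (ℓ : ℕ) (J : Set (ZMod ℓ)) (μ : YoungDiagram) : Prop :=
  ∀ c, ¬ IsJRemovable ℓ J μ c

/-- One step: delete one `J`-removable box. -/
def JRemoveStep (ℓ : ℕ) (J : Set (ZMod ℓ)) (μ ν : YoungDiagram) : Prop :=
  ∃ c, IsJRemovable ℓ J μ c ∧ ν.cells = μ.cells.erase c

/-- `ν` is a `J`-core of `λ`, obtained by successively deleting `J`-removable boxes. -/
def JReaches (ℓ : ℕ) (J : Set (ZMod ℓ)) (lam ν : YoungDiagram) : Prop :=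
  Relation.ReflTransGen (JRemoveStep ℓ J) lam ν ∧ IsJCore ℓ J ν

/-- `θ` extended to `ℤ` by `θ_j = θ_{j mod ℓ}`. -/
def θZ (ℓ : ℕ) (θ : ZMod ℓ → ℂ) (j : ℤ) : ℂ := θ (j : ZMod ℓ)

/-- The sum `θ_a + θ_{a+1} + ⋯ + θ_b`. -/
noncomputable def Ssum (ℓ : ℕ) (θ : ZMod ℓ → ℂ) (a b : ℤ) : ℂ :=
  ∑ i ∈ Finset.Icc a b, θZ ℓ θ i

/-- The (0-indexed) hook number of a box. -/
def hk (c : ℕ × ℕ) : ℕ := min c.1 c.2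

/-- The arm length `a_r` of the `r`-th hook (`r` 0-indexed). -/
def arm (μ : YoungDiagram) (r : ℕ) : ℤ := (μ.rowLen r : ℤ) - r - 1

/-- The leg length `b_r` of the `r`-th hook (`r` 0-indexed). -/
def leg (μ : YoungDiagram) (r : ℕ) : ℤ := (μ.colLen r : ℤ) - r - 1

/-- `β_r = θ_{-b_r} + ⋯ + θ_{a_r}`. -/
noncomputable def beta (ℓ : ℕ) (θ : ZMod ℓ → ℂ) (μ : YoungDiagram) (r : ℕ) : ℂ :=
  Ssum ℓ θ (-(leg μ r)) (arm μ r)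

/-- The underlying vector space of `A_μ`, with basis indexed by the boxes of `μ`:
the box of hook number `r` and `∞`-residue `j` corresponds to the basis vector `v_{r,j}`. -/
abbrev V (μ : YoungDiagram) : Type := (↥μ.cells → ℂ)

/-- Matrix coefficient of `Y`: the coefficient of `v_{hk c', rsd c'}` in `Y(v_{hk c, rsd c})`. -/
noncomputable def cY (ℓ : ℕ) (θ : ZMod ℓ → ℂ) (μ : YoungDiagram) (c c' : ℕ × ℕ) : ℂ :=
  if rsd c' = rsd c + 1 then
    (if rsd c < 0 then
       (if hk c' = hk c then Ssum ℓ θ (-(leg μ (hk c))) (rsd c)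
        else if hk c < hk c' then beta ℓ θ μ (hk c') else 0)
     else
       (if hk c' = hk c then -Ssum ℓ θ (rsd c + 1) (arm μ (hk c))
        else if hk c' < hk c then -(beta ℓ θ μ (hk c')) else 0))
  else 0

/-- Matrix coefficient of `X`: `X(v_{r,j}) = v_{r,j-1}` (or `0`). -/
def cX (c c' : ℕ × ℕ) : ℂ :=
  if hk c' = hk c ∧ rsd c' = rsd c - 1 then 1 else 0

/-- The linear map on `V μ` with matrix coefficients `K`. -/
noncomputable def matMap (μ : YoungDiagram) (K : ℕ × ℕ → ℕ × ℕ → ℂ) :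
    V μ →ₗ[ℂ] V μ where
  toFun f := fun c' => ∑ c : ↥μ.cells, K c c' * f c
  map_add' f g := by
    funext c'
    simp only [Pi.add_apply, mul_add, Finset.sum_add_distrib]
  map_smul' a f := by
    funext c'
    simp only [Pi.smul_apply, smul_eq_mul, RingHom.id_apply, Finset.mul_sum]
    exact Finset.sum_congr rfl fun c _ => by ring

/-- The map `X` of the representation `A_μ`. -/
noncomputable def Xmap (μ : YoungDiagram) : V μ →ₗ[ℂ] V μ := matMap μ cX

/-- The map `Y` of the representation `A_μ`. -/
noncomputable def Ymap (ℓ : ℕ) (θ : ZMod ℓ → ℂ) (μ : YoungDiagram) : V μ →ₗ[ℂ] V μ :=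
  matMap μ (cY ℓ θ μ)

/-- The map `x` of the representation `A_μ`: `x(1) = -∑_r β_r v_{r,0}`. -/
noncomputable def xmap (ℓ : ℕ) (θ : ZMod ℓ → ℂ) (μ : YoungDiagram) : ℂ →ₗ[ℂ] V μ where
  toFun z := fun c => if rsd (c : ℕ × ℕ) = 0 then -(beta ℓ θ μ (hk (c : ℕ × ℕ))) * z else 0
  map_add' z w := by
    funext c
    by_cases h : rsd (c : ℕ × ℕ) = 0 <;> simp [h] <;> ring
  map_smul' a z := by
    funext c
    by_cases h : rsd (c : ℕ × ℕ) = 0 <;> simp [h] <;> ring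

/-- The map `y` of the representation `A_μ`: `y(v_{r,0}) = 1`, `y(v_{r,j}) = 0` for `j ≠ 0`. -/
noncomputable def ymap (μ : YoungDiagram) : V μ →ₗ[ℂ] ℂ where
  toFun f := ∑ c : ↥μ.cells, if rsd (c : ℕ × ℕ) = 0 then f c else 0
  map_add' f g := by
    rw [← Finset.sum_add_distrib]
    exact Finset.sum_congr rfl fun c _ => by
      by_cases h : rsd (c : ℕ × ℕ) = 0 <;> simp [h]
  map_smul' a f := by
    simp only [RingHom.id_apply, smul_eq_mul, Finset.mul_sum]
    exact Finset.sum_congr rfl fun c _ => by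
      by_cases h : rsd (c : ℕ × ℕ) = 0 <;> simp [h]

/-- The degree-`j` graded piece `V_j` of `V μ` (spanned by the `v_{r,j}`). -/
noncomputable def Vgr (μ : YoungDiagram) (j : ℤ) : Submodule ℂ (V μ) where
  carrier := {f | ∀ c : ↥μ.cells, rsd (c : ℕ × ℕ) ≠ j → f c = 0}
  add_mem' := fun {f g} hf hg c hc => by
    simp only [Pi.add_apply, hf c hc, hg c hc, add_zero]
  zero_mem' := fun c _ => rfl
  smul_mem' := fun a {f} hf c hc => by
    simp only [Pi.smul_apply, hf c hc, smul_zero]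

/-- The vertex space `V'_i = ⊕_{j ≡ i mod ℓ} V_j` of `A_μ`. -/
noncomputable def Vmod (ℓ : ℕ) (μ : YoungDiagram) (i : ZMod ℓ) : Submodule ℂ (V μ) where
  carrier := {f | ∀ c : ↥μ.cells, res ℓ (c : ℕ × ℕ) ≠ i → f c = 0}
  add_mem' := fun {f g} hf hg c hc => by
    simp only [Pi.add_apply, hf c hc, hg c hc, add_zero]
  zero_mem' := fun c _ => rfl
  smul_mem' := fun a {f} hf c hc => by
    simp only [Pi.smul_apply, hf c hc, smul_zero]

section


variable {ℓ : ℕ}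

lemma succ_ne_self' (hℓ : 2 ≤ ℓ) (j : ZMod ℓ) : j + 1 ≠ j := by
  haveI : Fact (1 < ℓ) := ⟨hℓ⟩
  intro h
  exact one_ne_zero (by linear_combination h : (1 : ZMod ℓ) = 0)

/-- coefficient of `θ j` in `(sC ℓ j θ) x`. -/
noncomputable def cfun (ℓ : ℕ) (j x : ZMod ℓ) : ℂ :=
  if x = j then -2 else (if x = j - 1 then 1 else 0) + (if x = j + 1 then 1 else 0)

lemma sC_apply' (j : ZMod ℓ) (φ : ZMod ℓ → ℂ) (x : ZMod ℓ) :
    sC ℓ j φ x = φ x + cfun ℓ j x * φ j := by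
  by_cases h : x = j
  · subst h; simp [sC, cfun]; ring
  · simp [sC, cfun, h]

lemma sC_add (j : ZMod ℓ) (φ ψ : ZMod ℓ → ℂ) :
    sC ℓ j (φ + ψ) = sC ℓ j φ + sC ℓ j ψ := by
  funext x
  simp only [Pi.add_apply, sC_apply']
  ring

lemma sC_smul (j : ZMod ℓ) (a : ℂ) (φ : ZMod ℓ → ℂ) :
    sC ℓ j (a • φ) = a • sC ℓ j φ := by
  funext x
  simp only [Pi.smul_apply, sC_apply', smul_eq_mul]
  ring

lemma sC_zero (j : ZMod ℓ) : sC ℓ j (0 : ZMod ℓ → ℂ) = 0 := by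
  funext x; simp [sC_apply']

lemma sC_ne_zero (j : ZMod ℓ) {u : ZMod ℓ → ℂ} (hu : u ≠ 0) : sC ℓ j u ≠ 0 := by
  intro h
  apply hu
  have := congrArg (sC ℓ j) h
  rwa [sC_sC, sC_zero] at this

/-- "antiderivative" for telescoping sums of `cfun`. -/
noncomputable def gg (ℓ : ℕ) (j x : ZMod ℓ) : ℂ :=
  (if x = j then 1 else 0) - (if x = j + 1 then 1 else 0)

lemma gg_succ (j x : ZMod ℓ) :
    gg ℓ j (x + 1) = (if x = j - 1 then (1:ℂ) else 0) - (if x = j then 1 else 0) := by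
  have h1 : (x + 1 = j) ↔ (x = j - 1) := by
    constructor
    · intro h; rw [← h]; ring
    · intro h; rw [h]; ring
  have h2 : (x + 1 = j + 1) ↔ (x = j) := by
    constructor
    · intro h; exact add_right_cancel h
    · intro h; rw [h]
  simp only [gg, h1, h2]

lemma cfun_eq_gg (hℓ : 2 ≤ ℓ) (j x : ZMod ℓ) :
    cfun ℓ j x = gg ℓ j (x + 1) - gg ℓ j x := by
  haveI : Fact (1 < ℓ) := ⟨hℓ⟩
  have hjj1 : j ≠ j - 1 := by
    intro h
    exact one_ne_zero (by linear_combination h : (1 : ZMod ℓ) = 0)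
  have hjj2 : j ≠ j + 1 := fun h => succ_ne_self' hℓ j h.symm
  rw [gg_succ]
  by_cases hx : x = j
  · subst hx
    simp [cfun, gg, hjj1, hjj2]
    norm_num
  · simp only [cfun, gg, if_neg hx]
    ring

/-- sum of `φ ((a+i) mod ℓ)` over `i < n`. -/
noncomputable def SInt (ℓ : ℕ) (φ : ZMod ℓ → ℂ) (a : ℤ) (n : ℕ) : ℂ :=
  ∑ i ∈ Finset.range n, φ (((a + i : ℤ) : ZMod ℓ))

lemma sum_cfun (hℓ : 2 ≤ ℓ) (j : ZMod ℓ) (a : ℤ) (n : ℕ) :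
    ∑ i ∈ Finset.range n, cfun ℓ j (((a + i : ℤ) : ZMod ℓ))
      = gg ℓ j (((a + n : ℤ) : ZMod ℓ)) - gg ℓ j ((a : ZMod ℓ)) := by
  induction n with
  | zero => simp
  | succ n ih =>
    rw [Finset.sum_range_succ, ih, cfun_eq_gg hℓ]
    have h1 : (((a + ((n:ℕ)+1:ℕ) : ℤ) : ZMod ℓ)) = ((a + (n:ℕ) : ℤ) : ZMod ℓ) + 1 := by
      push_cast; ring
    rw [h1]
    ring

lemma SInt_sC (hℓ : 2 ≤ ℓ) (j : ZMod ℓ) (φ : ZMod ℓ → ℂ) (a : ℤ) (n : ℕ) :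
    SInt ℓ (sC ℓ j φ) a n
      = SInt ℓ φ a n + (gg ℓ j (((a + n : ℤ) : ZMod ℓ)) - gg ℓ j ((a : ZMod ℓ))) * φ j := by
  unfold SInt
  rw [← sum_cfun hℓ j a n, Finset.sum_mul, ← Finset.sum_add_distrib]
  exact Finset.sum_congr rfl fun i _ => by rw [sC_apply']

lemma sPerm_mem_Wgrp (j : ZMod ℓ) : sPerm ℓ j ∈ Wgrp ℓ :=
  Subgroup.subset_closure (Set.mem_range_self j)

lemma sPerm_apply (j : ZMod ℓ) (φ : ZMod ℓ → ℂ) : (sPerm ℓ j : _) φ = sC ℓ j φ := rfl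

/-- Main reflection construction: for `ℓ ∤ n` there is `w ∈ W` acting as a reflection
with root functional `φ ↦ SInt ℓ φ a n`. -/
lemma refl_exists (hℓ : 2 ≤ ℓ) :
    ∀ n : ℕ, ∀ a : ℤ, ¬ (ℓ ∣ n) →
      ∃ w ∈ Wgrp ℓ, ∃ u : ZMod ℓ → ℂ, u ≠ 0 ∧
        ∀ φ, (w : (ZMod ℓ → ℂ) → (ZMod ℓ → ℂ)) φ = φ + (SInt ℓ φ a n) • u := by
  intro n
  induction n using Nat.strong_induction_on with
  | _ n IH =>
  intro a hn
  haveI : Fact (1 < ℓ) := ⟨hℓ⟩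
  match n, hn with
  | 0, hn => exact absurd (dvd_zero ℓ) hn
  | 1, hn =>
    refine ⟨sPerm ℓ ((a : ZMod ℓ)), sPerm_mem_Wgrp _, (fun i => cfun ℓ ((a:ZMod ℓ)) i), ?_, ?_⟩
    · intro h
      have := congrFun h ((a : ZMod ℓ))
      simp [cfun] at this
    · intro φ
      funext x
      rw [sPerm_apply, sC_apply']
      have hS : SInt ℓ φ a 1 = φ ((a : ZMod ℓ)) := by
        simp [SInt]
      rw [hS]
      simp only [Pi.add_apply, Pi.smul_apply, smul_eq_mul]
      ring
  | (m+2), hn =>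
    by_cases h1 : (m+2) % ℓ = 1
    -- case n ≡ 1 mod ℓ : w = s_a ∘ w(n-2, a+1) ∘ s_a
    · have hcast : ((m : ZMod ℓ)) = -1 := by
        have h2n : (((m+2 : ℕ) : ZMod ℓ)) = 1 := by
          conv_lhs => rw [← Nat.mod_add_div (m+2) ℓ]
          push_cast [h1]
          simp [ZMod.natCast_self]
        push_cast at h2n
        linear_combination h2n
      have hm : ¬ (ℓ ∣ m) := by
        rintro ⟨t, rfl⟩
        rw [Nat.mul_add_mod ℓ t 2] at h1
        rcases Nat.lt_or_ge ℓ 3 with h | h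
        · interval_cases ℓ <;> omega
        · rw [Nat.mod_eq_of_lt (by omega)] at h1; omega
      obtain ⟨w', hw', u', hu', hact⟩ := IH m (by omega) (a + 1) hm
      set j : ZMod ℓ := ((a : ZMod ℓ)) with hj
      refine ⟨sPerm ℓ j * w' * sPerm ℓ j, ?_, sC ℓ j u', sC_ne_zero j hu', ?_⟩
      · exact mul_mem (mul_mem (sPerm_mem_Wgrp j) hw') (sPerm_mem_Wgrp j)
      · intro φ
        have happ : (((sPerm ℓ j * w' * sPerm ℓ j : Equiv.Perm _)) :
            (ZMod ℓ → ℂ) → (ZMod ℓ → ℂ)) φ = sC ℓ j ((w' : _) (sC ℓ j φ)) := rfl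
        rw [happ, hact (sC ℓ j φ), sC_add, sC_sC, sC_smul]
        congr 2
        -- SInt (sC j φ) (a+1) m = SInt φ a (m+2)
        rw [SInt_sC hℓ]
        have hma : (((a + 1 + m : ℤ) : ZMod ℓ)) = j := by
          rw [hj]
          push_cast [hcast]
          ring
        have hga : gg ℓ j (((a+1:ℤ)) : ZMod ℓ) = -1 := by
          have e1 : (((a+1:ℤ)) : ZMod ℓ) = j + 1 := by rw [hj]; push_cast; ring
          rw [e1]
          simp [gg, succ_ne_self' hℓ j]
        rw [hma, hga]
        have hgj : gg ℓ j j = 1 := by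
          have e2 : j ≠ j + 1 := fun h => succ_ne_self' hℓ j h.symm
          simp [gg, e2]
        rw [hgj]
        -- now: SInt φ (a+1) m + (1 - -1) * φ j = SInt φ a (m+2)
        have hsplit : SInt ℓ φ a (m+2) = φ j + φ j + SInt ℓ φ (a+1) m := by
          unfold SInt
          rw [Finset.sum_range_succ, Finset.sum_range_succ']
          have e0 : ((a + ((0:ℕ):ℤ) : ℤ) : ZMod ℓ) = j := by rw [hj]; push_cast; ring
          have elast : ((a + ((m+1 : ℕ):ℤ) : ℤ) : ZMod ℓ) = j := by
            rw [hj]; push_cast [hcast]; ring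
          rw [e0, elast]
          have hre : ∀ i ∈ Finset.range m, φ (((a + (((i:ℕ)+1:ℕ):ℤ)) : ℤ) : ZMod ℓ)
              = φ (((a + 1 + ((i:ℕ):ℤ)) : ℤ) : ZMod ℓ) := by
            intro i _
            congr 2
            push_cast; ring
          rw [Finset.sum_congr rfl hre]
          ring
        rw [hsplit]
        ring
    -- case n % ℓ ∉ {0,1} : w = s_j ∘ w(n-1, a) ∘ s_j with j = a + n - 1
    · have hm : ¬ (ℓ ∣ (m+1)) := by
        rintro ⟨t, ht⟩
        apply h1
        have h2 : m + 2 = ℓ * t + 1 := by omega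
        rw [h2, Nat.mul_add_mod ℓ t 1]
        exact Nat.mod_eq_of_lt (by omega)
      obtain ⟨w', hw', u', hu', hact⟩ := IH (m+1) (by omega) a hm
      set j : ZMod ℓ := (((a + ((m+1 : ℕ):ℤ) : ℤ)) : ZMod ℓ) with hj
      refine ⟨sPerm ℓ j * w' * sPerm ℓ j, ?_, sC ℓ j u', sC_ne_zero j hu', ?_⟩
      · exact mul_mem (mul_mem (sPerm_mem_Wgrp j) hw') (sPerm_mem_Wgrp j)
      · intro φ
        have happ : (((sPerm ℓ j * w' * sPerm ℓ j : Equiv.Perm _)) :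
            (ZMod ℓ → ℂ) → (ZMod ℓ → ℂ)) φ = sC ℓ j ((w' : _) (sC ℓ j φ)) := rfl
        rw [happ, hact (sC ℓ j φ), sC_add, sC_sC, sC_smul]
        congr 2
        rw [SInt_sC hℓ]
        have hgm : gg ℓ j (((a + ((m+1:ℕ):ℤ) : ℤ)) : ZMod ℓ) = 1 := by
          have e2 : j ≠ j + 1 := fun h => succ_ne_self' hℓ j h.symm
          rw [← hj]
          simp [gg, e2]
        have hga : gg ℓ j ((a : ℤ) : ZMod ℓ) = 0 := by
          have e1 : ((a : ℤ) : ZMod ℓ) ≠ j := by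
            rw [hj]
            intro h
            push_cast at h
            have hz : (((m+1 : ℕ)) : ZMod ℓ) = 0 := by
              push_cast
              linear_combination -h
            rw [ZMod.natCast_eq_zero_iff] at hz
            exact hm hz
          have e2 : ((a : ℤ) : ZMod ℓ) ≠ j + 1 := by
            rw [hj]
            intro h
            push_cast at h
            have hz : (((m+2 : ℕ)) : ZMod ℓ) = 0 := by
              push_cast
              linear_combination -h
            rw [ZMod.natCast_eq_zero_iff] at hz
            exact hn hz
          simp [gg, e1, e2]
        rw [hgm, hga]
        have hsplit : SInt ℓ φ a (m+2) = SInt ℓ φ a (m+1) + φ j := by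
          unfold SInt
          rw [Finset.sum_range_succ, hj]
        rw [hsplit]
        ring


end

section


variable {ℓ : ℕ}

lemma WJ_fixes {J : Set (ZMod ℓ)} {w : Equiv.Perm (ZMod ℓ → ℂ)} (hw : w ∈ WJ ℓ J)
    (φ : ZMod ℓ → ℂ) (hφ : ∀ i ∈ J, φ i = 0) :
    (w : (ZMod ℓ → ℂ) → (ZMod ℓ → ℂ)) φ = φ := by
  unfold WJ at hw
  induction hw using Subgroup.closure_induction with
  | mem g hg =>
    obtain ⟨j, hj, rfl⟩ := hg
    rw [sPerm_apply]
    funext x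
    rw [sC_apply', hφ j hj, mul_zero, add_zero]
  | one => rfl
  | mul g h _ _ hg hh =>
    rw [Equiv.Perm.mul_apply, hh, hg]
  | inv g _ hg =>
    conv_lhs => rw [← hg]
    exact Equiv.symm_apply_apply g φ

lemma Icc_int_insert_top (p : ℤ) (n : ℕ) :
    Finset.Icc p (p + n) = insert (p + n) (Finset.Icc p (p + n - 1)) := by
  ext x
  simp only [Finset.mem_Icc, Finset.mem_insert]
  omega

lemma sum_Icc_eq_range (f : ℤ → ℂ) (p : ℤ) (n : ℕ) :
    ∑ x ∈ Finset.Icc p (p + n - 1), f x = ∑ i ∈ Finset.range n, f (p + i) := by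
  induction n with
  | zero =>
    rw [Finset.range_zero, Finset.sum_empty, Finset.Icc_eq_empty (by omega)]
    rfl
  | succ n ih =>
    have h1 : p + ((n:ℕ)+1:ℕ) - 1 = p + n := by push_cast; ring
    rw [h1, Icc_int_insert_top p n, Finset.sum_insert (by simp), ih,
      Finset.sum_range_succ]
    ring

lemma sum_zmod_shift [NeZero ℓ] (θ : ZMod ℓ → ℂ) (c : ZMod ℓ) :
    ∑ z : ZMod ℓ, θ (c + z) = ∑ z : ZMod ℓ, θ z :=
  Fintype.sum_bijective (c + ·) (Equiv.addLeft c).bijective _ _ (fun _ => rfl)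

lemma sum_range_ell [NeZero ℓ] (θ : ZMod ℓ → ℂ) (c : ZMod ℓ) :
    ∑ j ∈ Finset.range ℓ, θ (c + (j:ℕ)) = ∑ z : ZMod ℓ, θ z := by
  rw [← sum_zmod_shift θ c]
  apply Finset.sum_nbij' (i := fun j => ((j : ℕ) : ZMod ℓ)) (j := fun z => z.val)
  · intro a _; exact Finset.mem_univ _
  · intro z _; exact Finset.mem_range.mpr (ZMod.val_lt z)
  · intro a ha; exact ZMod.val_cast_of_lt (Finset.mem_range.mp ha)
  · intro z _; exact ZMod.natCast_zmod_val z
  · intro a _; rfl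

lemma SInt_dvd [NeZero ℓ] (θ : ZMod ℓ → ℂ) (a : ℤ) (t : ℕ) :
    SInt ℓ θ a (ℓ * t) = (t : ℂ) * ∑ z : ZMod ℓ, θ z := by
  induction t with
  | zero => simp [SInt]
  | succ t ih =>
    have h1 : ℓ * (t + 1) = ℓ * t + ℓ := by ring
    unfold SInt at ih ⊢
    rw [h1, Finset.sum_range_add, ih]
    have h2 : ∀ j ∈ Finset.range ℓ, θ (((a + (((ℓ * t + j : ℕ)) : ℤ) : ℤ) : ZMod ℓ))
        = θ (((a : ZMod ℓ) + ((ℓ * t : ℕ) : ZMod ℓ)) + (j : ℕ)) := by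
      intro j _
      congr 1
      push_cast
      ring
    rw [Finset.sum_congr rfl h2]
    have h3 : ((ℓ * t : ℕ) : ZMod ℓ) = 0 := by
      rw [ZMod.natCast_eq_zero_iff]
      exact Dvd.intro t rfl
    rw [h3, add_zero, sum_range_ell]
    push_cast
    ring

/-- **Key lemma**: a vanishing interval sum forces all residues of the interval into `J`. -/
lemma vanishing_interval [NeZero ℓ] (hℓ : 2 ≤ ℓ) {J : Set (ZMod ℓ)} {θ : ZMod ℓ → ℂ}
    (hst : JStandard ℓ J θ) (ha : ∑ i : ZMod ℓ, θ i ≠ 0)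
    {p q : ℤ} (hpq : p ≤ q) (h0 : Ssum ℓ θ p q = 0) :
    ∀ x, p ≤ x → x ≤ q → ((x : ZMod ℓ) ∈ J) := by
  haveI : Fact (1 < ℓ) := ⟨hℓ⟩
  set n : ℕ := (q + 1 - p).toNat with hn
  have hq : q = p + n - 1 := by omega
  have hn1 : 1 ≤ n := by omega
  have hSS : Ssum ℓ θ p q = SInt ℓ θ p n := by
    unfold Ssum SInt θZ
    rw [hq]
    exact sum_Icc_eq_range _ p n
  rw [hSS] at h0
  by_cases hdvd : ℓ ∣ n
  · exfalso
    obtain ⟨t, ht⟩ := hdvd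
    rw [ht, SInt_dvd] at h0
    rcases mul_eq_zero.mp h0 with h | h
    · have : t ≠ 0 := by rintro rfl; omega
      exact this (by exact_mod_cast h)
    · exact ha h
  · obtain ⟨w, hw, u, hu, hact⟩ := refl_exists hℓ n p hdvd
    have hfixθ : (w : (ZMod ℓ → ℂ) → (ZMod ℓ → ℂ)) θ = θ := by
      rw [hact θ, h0, zero_smul, add_zero]
    have hwJ := (hst w hw).mp hfixθ
    intro x hx1 hx2
    by_contra hxJ
    set φ : ZMod ℓ → ℂ := fun i => if i = (x : ZMod ℓ) then 1 else 0 with hφ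
    have hfix := WJ_fixes hwJ φ (fun i hi => by
      rw [hφ]
      simp only
      rw [if_neg]
      rintro rfl
      exact hxJ hi)
    rw [hact φ] at hfix
    have hsz : SInt ℓ φ p n • u = 0 := by
      have := congrArg (fun g => g - φ) hfix
      simpa using this
    have hS0 : SInt ℓ φ p n = 0 := by
      rcases smul_eq_zero.mp hsz with h | h
      · exact h
      · exact absurd h hu
    have hcard : SInt ℓ φ p n
        = (((Finset.range n).filter (fun i => ((p + (i:ℕ) : ℤ) : ZMod ℓ) = (x : ZMod ℓ))).card : ℂ) := by
      unfold SInt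
      rw [hφ]
      simp only
      rw [Finset.sum_boole]
    have hwit : ((x - p).toNat) ∈ (Finset.range n).filter
        (fun i => ((p + (i:ℕ) : ℤ) : ZMod ℓ) = (x : ZMod ℓ)) := by
      rw [Finset.mem_filter, Finset.mem_range]
      constructor
      · omega
      · congr 1
        omega
    rw [hcard] at hS0
    have : (((Finset.range n).filter (fun i => ((p + (i:ℕ) : ℤ) : ZMod ℓ) = (x : ZMod ℓ))).card) = 0 := by
      exact_mod_cast hS0
    rw [Finset.card_eq_zero] at this
    rw [this] at hwit
    exact absurd hwit (Finset.notMem_empty _)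


end

section


variable {μ : YoungDiagram}

/-- The cell of hook number `r` and residue `j`. -/
def hcell (r : ℕ) (j : ℤ) : ℕ × ℕ := if 0 ≤ j then (r, r + j.toNat) else (r + (-j).toNat, r)

lemma hk_hcell (r : ℕ) (j : ℤ) : hk (hcell r j) = r := by
  unfold hcell hk
  split <;> simp [min_eq_left, min_eq_right]

lemma rsd_hcell (r : ℕ) (j : ℤ) : rsd (hcell r j) = j := by
  unfold hcell rsd
  split <;> push_cast <;> omega

lemma cell_eq_hcell {c : ℕ × ℕ} : c = hcell (hk c) (rsd c) := by
  obtain ⟨i, j⟩ := c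
  unfold hcell hk rsd
  rcases le_total i j with h | h
  · rw [if_pos (by simp; omega)]
    simp only [min_eq_left h]
    congr 1
    omega
  · rcases eq_or_lt_of_le h with h' | h'
    · subst h'
      rw [if_pos (by simp)]
      simp
    · rw [if_neg (by simp; omega)]
      simp only [min_eq_right h]
      congr 1
      omega

lemma arm_nonneg (hr : (r, r) ∈ μ) : 0 ≤ arm μ r := by
  have := YoungDiagram.mem_iff_lt_rowLen.mp hr
  unfold arm; omega

lemma leg_nonneg (hr : (r, r) ∈ μ) : 0 ≤ leg μ r := by
  have := YoungDiagram.mem_iff_lt_colLen.mp hr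
  unfold leg; omega

lemma arm_strict_anti {r r' : ℕ} (h : r < r') : arm μ r' < arm μ r := by
  have := μ.rowLen_anti r r' (le_of_lt h)
  unfold arm; omega

lemma leg_strict_anti {r r' : ℕ} (h : r < r') : leg μ r' < leg μ r := by
  have := μ.colLen_anti r r' (le_of_lt h)
  unfold leg; omega

lemma arm_anti {r r' : ℕ} (h : r ≤ r') : arm μ r' ≤ arm μ r := by
  have := μ.rowLen_anti r r' h
  unfold arm; omega

lemma leg_anti {r r' : ℕ} (h : r ≤ r') : leg μ r' ≤ leg μ r := by
  have := μ.colLen_anti r r' h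
  unfold leg; omega

lemma hcell_mem_iff (hr : (r, r) ∈ μ) (j : ℤ) :
    hcell r j ∈ μ ↔ (-(leg μ r) ≤ j ∧ j ≤ arm μ r) := by
  unfold hcell
  by_cases h : 0 ≤ j
  · rw [if_pos h, YoungDiagram.mem_iff_lt_rowLen]
    have hl := leg_nonneg hr
    have hrl := YoungDiagram.mem_iff_lt_rowLen.mp hr
    unfold arm
    omega
  · rw [if_neg h, YoungDiagram.mem_iff_lt_colLen]
    have ha := arm_nonneg hr
    have hcl := YoungDiagram.mem_iff_lt_colLen.mp hr
    unfold leg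
    omega

lemma hk_mem {c : ℕ × ℕ} (hc : c ∈ μ) : (hk c, hk c) ∈ μ := by
  obtain ⟨i, j⟩ := c
  exact μ.up_left_mem (min_le_left i j) (min_le_right i j) hc

lemma neg_leg_le_rsd {c : ℕ × ℕ} (hc : c ∈ μ) : -(leg μ (hk c)) ≤ rsd c := by
  have h := cell_eq_hcell (c := c)
  have := (hcell_mem_iff (hk_mem hc) (rsd c)).mp (by rw [← h]; exact hc)
  exact this.1

lemma rsd_le_arm {c : ℕ × ℕ} (hc : c ∈ μ) : rsd c ≤ arm μ (hk c) := by
  have h := cell_eq_hcell (c := c)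
  have := (hcell_mem_iff (hk_mem hc) (rsd c)).mp (by rw [← h]; exact hc)
  exact this.2

/-- A row-corner is removable. -/
lemma removable_of_rowLen (i : ℕ) (h1 : 0 < μ.rowLen i) (h2 : μ.rowLen (i+1) < μ.rowLen i) :
    IsRemovable μ (i, μ.rowLen i - 1) := by
  constructor
  · rw [YoungDiagram.mem_cells, YoungDiagram.mem_iff_lt_rowLen]; omega
  · refine ⟨⟨μ.cells.erase (i, μ.rowLen i - 1), ?_⟩, rfl⟩
    intro q p hpq hq
    rw [Finset.coe_erase, Set.mem_diff] at hq ⊢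
    obtain ⟨hq1, hq2⟩ := hq
    constructor
    · exact μ.isLowerSet hpq hq1
    · simp only [Set.mem_singleton_iff] at hq2 ⊢
      rintro rfl
      -- p = corner, p ≤ q, q ∈ μ, q ≠ corner : contradiction
      obtain ⟨hq1', hq2'⟩ := hpq
      simp only at hq1' hq2'
      have hqmem : q ∈ μ := hq1
      rw [show q = (q.1, q.2) from rfl, YoungDiagram.mem_iff_lt_rowLen] at hqmem
      rcases Nat.lt_or_ge q.1 (i+1) with h | h
      · have : q.1 = i := by omega
        apply hq2
        have : q.2 = μ.rowLen i - 1 := by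
          have := μ.rowLen_anti i q.1 (by omega)
          omega
        rw [Prod.ext_iff]
        constructor <;> simp <;> omega
      · have := μ.rowLen_anti (i+1) q.1 h
        omega

/-- A column-corner is removable. -/
lemma removable_of_colLen (jc : ℕ) (h1 : 0 < μ.colLen jc) (h2 : μ.colLen (jc+1) < μ.colLen jc) :
    IsRemovable μ (μ.colLen jc - 1, jc) := by
  constructor
  · rw [YoungDiagram.mem_cells, YoungDiagram.mem_iff_lt_colLen]; omega
  · refine ⟨⟨μ.cells.erase (μ.colLen jc - 1, jc), ?_⟩, rfl⟩
    intro q p hpq hq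
    rw [Finset.coe_erase, Set.mem_diff] at hq ⊢
    obtain ⟨hq1, hq2⟩ := hq
    constructor
    · exact μ.isLowerSet hpq hq1
    · simp only [Set.mem_singleton_iff] at hq2 ⊢
      rintro rfl
      obtain ⟨hq1', hq2'⟩ := hpq
      simp only at hq1' hq2'
      have hqmem : q ∈ μ := hq1
      rw [show q = (q.1, q.2) from rfl, YoungDiagram.mem_iff_lt_colLen] at hqmem
      rcases Nat.lt_or_ge q.2 (jc+1) with h | h
      · have : q.2 = jc := by omega
        apply hq2
        have : q.1 = μ.colLen jc - 1 := by
          have := μ.colLen_anti jc q.2 (by omega)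
          omega
        rw [Prod.ext_iff]
        constructor <;> simp <;> omega
      · have := μ.colLen_anti (jc+1) q.2 h
        omega

/-- Lemma R: every hook contains (the residue of) a removable box. -/
lemma hook_has_removable (hr : (r, r) ∈ μ) :
    ∃ c, IsRemovable μ c ∧ -(leg μ r) ≤ rsd c ∧ rsd c ≤ arm μ r := by
  set R : ℕ := μ.colLen r - 1 with hR
  have hcolpos : r < μ.colLen r := YoungDiagram.mem_iff_lt_colLen.mp hr
  have hRr : r ≤ R := by omega
  have hRrow : r < μ.rowLen R := by
    rw [← YoungDiagram.mem_iff_lt_rowLen]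
    rw [YoungDiagram.mem_iff_lt_colLen]
    omega
  have hnext : μ.rowLen (R+1) ≤ r := by
    by_contra h
    push_neg at h
    have : (R+1, r) ∈ μ := YoungDiagram.mem_iff_lt_rowLen.mpr h
    rw [YoungDiagram.mem_iff_lt_colLen] at this
    omega
  refine ⟨(R, μ.rowLen R - 1), removable_of_rowLen R (by omega) (by omega), ?_, ?_⟩
  · unfold rsd leg
    simp only
    omega
  · unfold rsd arm
    simp only
    have := μ.rowLen_anti r R hRr
    omega

variable {ℓ : ℕ} {J : Set (ZMod ℓ)}

lemma not_removable_res (hμ : IsJCore ℓ J μ) {c : ℕ × ℕ} (hc : IsRemovable μ c) :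
    res ℓ c ∉ J := fun hJ => hμ c ⟨hc, hJ⟩

/-- If all residues of a full hook interval lie in `J`, contradiction with `J`-core. -/
lemma hook_subJ_false (hμ : IsJCore ℓ J μ) (hr : (r, r) ∈ μ)
    (hsub : ∀ x : ℤ, -(leg μ r) ≤ x → x ≤ arm μ r → ((x : ZMod ℓ) ∈ J)) : False := by
  obtain ⟨c, hrem, h1, h2⟩ := hook_has_removable hr
  exact not_removable_res hμ hrem (hsub (rsd c) h1 h2)

/-- Lemma R2 (arm version): if all residues of `[m+1, arm r]` lie in `J` then some hook
has arm exactly `m`. -/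
lemma arm_walk (hμ : IsJCore ℓ J μ) (hr : (r, r) ∈ μ) {m : ℤ} (hm : 0 ≤ m)
    (hma : m + 1 ≤ arm μ r)
    (hsub : ∀ x : ℤ, m + 1 ≤ x → x ≤ arm μ r → ((x : ZMod ℓ) ∈ J)) :
    ∃ H : ℕ, (H, H) ∈ μ ∧ arm μ H = m := by
  -- walk down the rows
  have key : ∀ d : ℕ, ∀ i : ℕ, r ≤ i → (μ.rowLen i : ℤ) - 1 - i = m + 1 + d →
      m + 1 + d ≤ arm μ r → ∃ H : ℕ, (H, H) ∈ μ ∧ arm μ H = m := by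
    intro d
    induction d with
    | zero =>
      intro i hi hco hle
      have hpos : 0 < μ.rowLen i := by omega
      have heq : μ.rowLen (i+1) = μ.rowLen i := by
        rcases Nat.lt_or_ge (μ.rowLen (i+1)) (μ.rowLen i) with h | h
        · exfalso
          have hrem := removable_of_rowLen i hpos h
          apply not_removable_res hμ hrem
          have : res ℓ (i, μ.rowLen i - 1) = (((μ.rowLen i : ℤ) - 1 - i : ℤ) : ZMod ℓ) := by
            unfold res rsd
            congr 1
            simp only
            omega
          rw [this, hco]
          exact hsub _ (by omega) (by omega)
        · exact le_antisymm (μ.rowLen_anti i (i+1) (by omega)) h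
      refine ⟨i + 1, ?_, ?_⟩
      · rw [YoungDiagram.mem_iff_lt_rowLen, heq]
        omega
      · unfold arm
        rw [heq]
        push_cast
        omega
    | succ d ih =>
      intro i hi hco hle
      have hpos : 0 < μ.rowLen i := by omega
      have heq : μ.rowLen (i+1) = μ.rowLen i := by
        rcases Nat.lt_or_ge (μ.rowLen (i+1)) (μ.rowLen i) with h | h
        · exfalso
          have hrem := removable_of_rowLen i hpos h
          apply not_removable_res hμ hrem
          have : res ℓ (i, μ.rowLen i - 1) = (((μ.rowLen i : ℤ) - 1 - i : ℤ) : ZMod ℓ) := by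
            unfold res rsd
            congr 1
            simp only
            omega
          rw [this, hco]
          exact hsub _ (by omega) (by omega)
        · exact le_antisymm (μ.rowLen_anti i (i+1) (by omega)) h
      exact ih (i+1) (by omega) (by push_cast; omega) (by omega)
  have harm : (μ.rowLen r : ℤ) - 1 - r = arm μ r := by unfold arm; ring
  exact key (arm μ r - (m+1)).toNat r le_rfl (by unfold arm at hma ⊢; omega)
    (by omega)

/-- Lemma R2' (leg version): if all residues of `[-leg s, j]` lie in `J` (`j ≤ -1`)
then some hook has leg exactly `-j-1`. -/
lemma leg_walk (hμ : IsJCore ℓ J μ) (hs : (s, s) ∈ μ) {j : ℤ} (hj : j ≤ -1)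
    (hjb : -(leg μ s) ≤ j)
    (hsub : ∀ x : ℤ, -(leg μ s) ≤ x → x ≤ j → ((x : ZMod ℓ) ∈ J)) :
    ∃ H : ℕ, (H, H) ∈ μ ∧ leg μ H = -j - 1 := by
  have key : ∀ d : ℕ, ∀ c : ℕ, s ≤ c → ((c : ℤ) - (μ.colLen c : ℤ) + 1 = j - d) →
      -(leg μ s) ≤ j - d → ∃ H : ℕ, (H, H) ∈ μ ∧ leg μ H = -j - 1 := by
    intro d
    induction d with
    | zero =>
      intro c hc hco hge
      have hpos : 0 < μ.colLen c := by omega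
      have heq : μ.colLen (c+1) = μ.colLen c := by
        rcases Nat.lt_or_ge (μ.colLen (c+1)) (μ.colLen c) with h | h
        · exfalso
          have hrem := removable_of_colLen c hpos h
          apply not_removable_res hμ hrem
          have : res ℓ (μ.colLen c - 1, c) = (((c : ℤ) - (μ.colLen c : ℤ) + 1 : ℤ) : ZMod ℓ) := by
            unfold res rsd
            congr 1
            simp only
            omega
          rw [this, hco]
          exact hsub _ (by omega) (by omega)
        · exact le_antisymm (μ.colLen_anti c (c+1) (by omega)) h
      refine ⟨c + 1, ?_, ?_⟩
      · rw [YoungDiagram.mem_iff_lt_colLen, heq]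
        omega
      · unfold leg
        rw [heq]
        push_cast
        omega
    | succ d ih =>
      intro c hc hco hge
      have hpos : 0 < μ.colLen c := by omega
      have heq : μ.colLen (c+1) = μ.colLen c := by
        rcases Nat.lt_or_ge (μ.colLen (c+1)) (μ.colLen c) with h | h
        · exfalso
          have hrem := removable_of_colLen c hpos h
          apply not_removable_res hμ hrem
          have : res ℓ (μ.colLen c - 1, c) = (((c : ℤ) - (μ.colLen c : ℤ) + 1 : ℤ) : ZMod ℓ) := by
            unfold res rsd
            congr 1
            simp only
            omega
          rw [this, hco]
          exact hsub _ (by omega) (by omega)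
        · exact le_antisymm (μ.colLen_anti c (c+1) (by omega)) h
      exact ih (c+1) (by omega) (by push_cast; omega) (by omega)
  exact key (j + leg μ s).toNat s le_rfl (by unfold leg at hjb ⊢; omega) (by omega)


end

section


open Finset

variable {ℓ : ℕ} {J : Set (ZMod ℓ)} {θ : ZMod ℓ → ℂ} {μ : YoungDiagram}

/-- delta function at a box. -/
def sgl (μ : YoungDiagram) (c : ℕ × ℕ) : V μ := fun c' => if (c' : ℕ × ℕ) = c then 1 else 0

/-- boxes of `∞`-residue `n`, as a finset of the index type. -/
def lvl (μ : YoungDiagram) (n : ℤ) : Finset (↥μ.cells) :=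
  Finset.univ.filter (fun c' => rsd (c' : ℕ × ℕ) = n)

lemma mem_lvl {n : ℤ} {c : ↥μ.cells} : c ∈ lvl μ n ↔ rsd (c : ℕ × ℕ) = n := by
  simp [lvl]

lemma sgl_apply (c : ℕ × ℕ) (c' : ↥μ.cells) :
    sgl μ c c' = if (c' : ℕ × ℕ) = c then 1 else 0 := rfl

/-- The transpose of `X`. -/
noncomputable def XT (μ : YoungDiagram) : V μ →ₗ[ℂ] V μ :=
  matMap μ (fun c c' => cX c' c)

/-- The transpose of `Y`. -/
noncomputable def YT (ℓ : ℕ) (θ : ZMod ℓ → ℂ) (μ : YoungDiagram) : V μ →ₗ[ℂ] V μ :=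
  matMap μ (fun c c' => cY ℓ θ μ c' c)

lemma matMap_apply (K : ℕ × ℕ → ℕ × ℕ → ℂ) (f : V μ) (c' : ↥μ.cells) :
    matMap μ K f c' = ∑ c : ↥μ.cells, K c c' * f c := rfl

lemma matMap_sgl (K : ℕ × ℕ → ℕ × ℕ → ℂ) {c₀ : ℕ × ℕ} (hc₀ : c₀ ∈ μ.cells) :
    matMap μ K (sgl μ c₀) = fun c' : ↥μ.cells => K c₀ c' := by
  funext c'
  rw [matMap_apply]
  rw [Finset.sum_eq_single (⟨c₀, hc₀⟩ : ↥μ.cells)]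
  · rw [sgl_apply, if_pos rfl, mul_one]
  · intro b _ hb
    rw [sgl_apply, if_neg, mul_zero]
    intro h
    exact hb (Subtype.ext h)
  · intro h
    exact absurd (Finset.mem_univ _) h

lemma sum_sgl_apply (s : Finset (↥μ.cells)) (f : ↥μ.cells → ℂ) (c' : ↥μ.cells) :
    (∑ t ∈ s, f t • sgl μ (t : ℕ × ℕ)) c' = if c' ∈ s then f c' else 0 := by
  rw [Finset.sum_apply]
  by_cases h : c' ∈ s
  · rw [if_pos h, Finset.sum_eq_single c']
    · rw [Pi.smul_apply, sgl_apply, if_pos rfl, smul_eq_mul, mul_one]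
    · intro b _ hb
      rw [Pi.smul_apply, sgl_apply, if_neg, smul_zero]
      intro hh
      exact hb (Subtype.ext hh).symm
    · intro hh
      exact absurd h hh
  · rw [if_neg h]
    apply Finset.sum_eq_zero
    intro b hb
    rw [Pi.smul_apply, sgl_apply, if_neg, smul_zero]
    intro hh
    rw [Subtype.ext hh] at h
    exact h hb

lemma smul_sgl_apply (a : ℂ) (c : ℕ × ℕ) (c' : ↥μ.cells) :
    (a • sgl μ c) c' = if (c' : ℕ × ℕ) = c then a else 0 := by
  rw [Pi.smul_apply, sgl_apply]
  by_cases h : (c' : ℕ × ℕ) = c <;> simp [h]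

/-- A submodule containing all box delta functions is everything. -/
lemma eq_top_of_sgl (C : Submodule ℂ (V μ)) (h : ∀ c ∈ μ.cells, sgl μ c ∈ C) : C = ⊤ := by
  rw [eq_top_iff]
  intro f _
  have hf : f = ∑ c' : ↥μ.cells, f c' • sgl μ (c' : ℕ × ℕ) := by
    funext x
    rw [sum_sgl_apply Finset.univ f x, if_pos (Finset.mem_univ x)]
  rw [hf]
  exact Submodule.sum_mem _ (fun c' _ => Submodule.smul_mem _ _ (h _ c'.2))

lemma Ssum_split (p m q : ℤ) (h1 : p - 1 ≤ m) (h2 : m ≤ q) :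
    Ssum ℓ θ p q = Ssum ℓ θ p m + Ssum ℓ θ (m+1) q := by
  unfold Ssum
  rw [← Finset.sum_union]
  · congr 1
    ext x
    simp only [Finset.mem_union, Finset.mem_Icc]
    omega
  · rw [Finset.disjoint_left]
    intro x hx hx'
    rw [Finset.mem_Icc] at hx hx'
    omega

lemma Ssum_empty {p q : ℤ} (h : q < p) : Ssum ℓ θ p q = 0 := by
  unfold Ssum
  rw [Finset.Icc_eq_empty (by omega), Finset.sum_empty]

lemma beta_split (r : ℕ) {m : ℤ} (h1 : -(leg μ r) - 1 ≤ m) (h2 : m ≤ arm μ r) :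
    beta ℓ θ μ r = Ssum ℓ θ (-(leg μ r)) m + Ssum ℓ θ (m+1) (arm μ r) :=
  Ssum_split _ m _ (by omega) h2

/-- `β_r ≠ 0` for every hook of a `J`-core. -/
lemma beta_ne_zero [NeZero ℓ] (hℓ : 2 ≤ ℓ) (hst : JStandard ℓ J θ)
    (ha : ∑ i : ZMod ℓ, θ i ≠ 0) (hμ : IsJCore ℓ J μ) {r : ℕ} (hr : (r, r) ∈ μ) :
    beta ℓ θ μ r ≠ 0 := by
  intro h
  apply hook_subJ_false hμ hr
  intro x h1 h2
  exact vanishing_interval hℓ hst ha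
    (le_trans (neg_nonpos.mpr (leg_nonneg hr)) (arm_nonneg hr)) h x h1 h2

/-- The pair rule: a prefix sum (of hook `r'`) and a suffix sum (of hook `r`) cutting at the
same place cannot both vanish. -/
lemma pair_rule [NeZero ℓ] (hℓ : 2 ≤ ℓ) (hst : JStandard ℓ J θ)
    (ha : ∑ i : ZMod ℓ, θ i ≠ 0) (hμ : IsJCore ℓ J μ) {r r' : ℕ}
    (hr : (r, r) ∈ μ) (hr' : (r', r') ∈ μ) {m : ℤ}
    (h1 : -(leg μ r') ≤ m) (h2 : m + 1 ≤ arm μ r)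
    (hS : Ssum ℓ θ (-(leg μ r')) m = 0) (hT : Ssum ℓ θ (m+1) (arm μ r) = 0) : False := by
  have hqmem : (max r r', max r r') ∈ μ := by
    rcases max_cases r r' with ⟨h, _⟩ | ⟨h, _⟩ <;> rw [h] <;> assumption
  apply hook_subJ_false hμ hqmem
  have hle1 := leg_anti (μ := μ) (le_max_right r r')
  have hle2 := arm_anti (μ := μ) (le_max_left r r')
  intro x hx1 hx2
  rcases le_or_gt x m with h | h
  · exact vanishing_interval hℓ hst ha h1 hS x (by omega) h
  · exact vanishing_interval hℓ hst ha h2 hT x (by omega) (by omega)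

/-- Descending chain lemma: if for each `c` in `ι` the submodule `C` contains a vector
`d c • sgl c + (combination of sgl t, t ∈ ι with larger hook)`, with `d c ≠ 0`,
then `C` contains all `sgl c`, `c ∈ ι`. -/
lemma chain_desc (C : Submodule ℂ (V μ)) (ι : Finset (↥μ.cells)) (d : ↥μ.cells → ℂ)
    (f : ↥μ.cells → ↥μ.cells → ℂ)
    (hd : ∀ c ∈ ι, d c ≠ 0)
    (hA : ∀ c ∈ ι, (d c • sgl μ (c : ℕ × ℕ)
      + ∑ t ∈ ι.filter (fun t : ↥μ.cells => hk (c : ℕ × ℕ) < hk (t : ℕ × ℕ)), f c t • sgl μ (t : ℕ × ℕ)) ∈ C) :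
    ∀ c ∈ ι, sgl μ (c : ℕ × ℕ) ∈ C := by
  have main : ∀ N : ℕ, ∀ c ∈ ι,
      (ι.filter (fun t : ↥μ.cells => hk (c : ℕ × ℕ) < hk (t : ℕ × ℕ))).card ≤ N →
        sgl μ (c : ℕ × ℕ) ∈ C := by
    intro N
    induction N with
    | zero =>
      intro c hc hcard
      have hempty : ι.filter (fun t : ↥μ.cells => hk (c : ℕ × ℕ) < hk (t : ℕ × ℕ)) = ∅ :=
        Finset.card_eq_zero.mp (Nat.le_zero.mp hcard)
      have := hA c hc
      rw [hempty, Finset.sum_empty, add_zero] at this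
      have h2 := Submodule.smul_mem C (d c)⁻¹ this
      rwa [inv_smul_smul₀ (hd c hc)] at h2
    | succ N ih =>
      intro c hc hcard
      have hsub : ∀ t ∈ ι.filter (fun t : ↥μ.cells => hk (c : ℕ × ℕ) < hk (t : ℕ × ℕ)),
          sgl μ (t : ℕ × ℕ) ∈ C := by
        intro t ht
        have ht2 := Finset.mem_filter.mp ht
        apply ih t ht2.1
        have hss : ι.filter (fun s : ↥μ.cells => hk (t : ℕ × ℕ) < hk (s : ℕ × ℕ))
            ⊆ (ι.filter (fun s : ↥μ.cells => hk (c : ℕ × ℕ) < hk (s : ℕ × ℕ))).erase t := by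
          intro s hs
          rw [Finset.mem_filter] at hs
          rw [Finset.mem_erase, Finset.mem_filter]
          refine ⟨?_, hs.1, lt_trans ht2.2 hs.2⟩
          intro hst
          rw [hst] at hs
          exact lt_irrefl _ hs.2
        have := Finset.card_le_card hss
        have := Finset.card_erase_of_mem ht
        omega
      have hAc := hA c hc
      have hsum : (∑ t ∈ ι.filter (fun t : ↥μ.cells => hk (c : ℕ × ℕ) < hk (t : ℕ × ℕ)),
          f c t • sgl μ (t : ℕ × ℕ)) ∈ C :=
        Submodule.sum_mem _ (fun t ht => Submodule.smul_mem _ _ (hsub t ht))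
      have : (d c • sgl μ (c : ℕ × ℕ)) ∈ C := by
        have := Submodule.sub_mem C hAc hsum
        simpa using this
      have h2 := Submodule.smul_mem C (d c)⁻¹ this
      rwa [inv_smul_smul₀ (hd c hc)] at h2
  intro c hc
  exact main _ c hc le_rfl

/-- Ascending chain lemma. -/
lemma chain_asc (C : Submodule ℂ (V μ)) (ι : Finset (↥μ.cells)) (d : ↥μ.cells → ℂ)
    (f : ↥μ.cells → ↥μ.cells → ℂ)
    (hd : ∀ c ∈ ι, d c ≠ 0)
    (hA : ∀ c ∈ ι, (d c • sgl μ (c : ℕ × ℕ)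
      + ∑ t ∈ ι.filter (fun t : ↥μ.cells => hk (t : ℕ × ℕ) < hk (c : ℕ × ℕ)), f c t • sgl μ (t : ℕ × ℕ)) ∈ C) :
    ∀ c ∈ ι, sgl μ (c : ℕ × ℕ) ∈ C := by
  have main : ∀ N : ℕ, ∀ c ∈ ι,
      (ι.filter (fun t : ↥μ.cells => hk (t : ℕ × ℕ) < hk (c : ℕ × ℕ))).card ≤ N →
        sgl μ (c : ℕ × ℕ) ∈ C := by
    intro N
    induction N with
    | zero =>
      intro c hc hcard
      have hempty : ι.filter (fun t : ↥μ.cells => hk (t : ℕ × ℕ) < hk (c : ℕ × ℕ)) = ∅ :=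
        Finset.card_eq_zero.mp (Nat.le_zero.mp hcard)
      have := hA c hc
      rw [hempty, Finset.sum_empty, add_zero] at this
      have h2 := Submodule.smul_mem C (d c)⁻¹ this
      rwa [inv_smul_smul₀ (hd c hc)] at h2
    | succ N ih =>
      intro c hc hcard
      have hsub : ∀ t ∈ ι.filter (fun t : ↥μ.cells => hk (t : ℕ × ℕ) < hk (c : ℕ × ℕ)),
          sgl μ (t : ℕ × ℕ) ∈ C := by
        intro t ht
        have ht2 := Finset.mem_filter.mp ht
        apply ih t ht2.1
        have hss : ι.filter (fun s : ↥μ.cells => hk (s : ℕ × ℕ) < hk (t : ℕ × ℕ))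
            ⊆ (ι.filter (fun s : ↥μ.cells => hk (s : ℕ × ℕ) < hk (c : ℕ × ℕ))).erase t := by
          intro s hs
          rw [Finset.mem_filter] at hs
          rw [Finset.mem_erase, Finset.mem_filter]
          refine ⟨?_, hs.1, lt_trans hs.2 ht2.2⟩
          intro hst
          rw [hst] at hs
          exact lt_irrefl _ hs.2
        have := Finset.card_le_card hss
        have := Finset.card_erase_of_mem ht
        omega
      have hAc := hA c hc
      have hsum : (∑ t ∈ ι.filter (fun t : ↥μ.cells => hk (t : ℕ × ℕ) < hk (c : ℕ × ℕ)),
          f c t • sgl μ (t : ℕ × ℕ)) ∈ C :=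
        Submodule.sum_mem _ (fun t ht => Submodule.smul_mem _ _ (hsub t ht))
      have : (d c • sgl μ (c : ℕ × ℕ)) ∈ C := by
        have := Submodule.sub_mem C hAc hsum
        simpa using this
      have h2 := Submodule.smul_mem C (d c)⁻¹ this
      rwa [inv_smul_smul₀ (hd c hc)] at h2
  intro c hc
  exact main _ c hc le_rfl


end

section


open Finset

variable {ℓ : ℕ} {θ : ZMod ℓ → ℂ} {μ : YoungDiagram}

lemma mem_cells_iff_hcell {c : ℕ × ℕ} (hc : c ∈ μ.cells) {j : ℤ} :
    (hcell (hk c) j ∈ μ.cells) ↔ (-(leg μ (hk c)) ≤ j ∧ j ≤ arm μ (hk c)) := by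
  rw [YoungDiagram.mem_cells]
  exact hcell_mem_iff (hk_mem ((YoungDiagram.mem_cells _).mp hc)) j

lemma Xmap_apply (f : V μ) (c' : ↥μ.cells) :
    Xmap μ f c' = if h : hcell (hk (c' : ℕ × ℕ)) (rsd (c' : ℕ × ℕ) + 1) ∈ μ.cells
      then f ⟨_, h⟩ else 0 := by
  show (∑ c : ↥μ.cells, cX (c : ℕ × ℕ) (c' : ℕ × ℕ) * f c) = _
  by_cases h : hcell (hk (c' : ℕ × ℕ)) (rsd (c' : ℕ × ℕ) + 1) ∈ μ.cells
  · rw [dif_pos h, Finset.sum_eq_single (⟨_, h⟩ : ↥μ.cells)]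
    · rw [cX, if_pos, one_mul]
      constructor
      · rw [hk_hcell]
      · rw [rsd_hcell]; ring
    · intro b _ hb
      rw [cX, if_neg, zero_mul]
      rintro ⟨h1, h2⟩
      apply hb
      apply Subtype.ext
      show (b : ℕ × ℕ) = hcell (hk (c' : ℕ × ℕ)) (rsd (c' : ℕ × ℕ) + 1)
      conv_lhs => rw [cell_eq_hcell (c := (b : ℕ × ℕ))]
      congr 1
      · exact h1.symm
      · omega
    · intro hh; exact absurd (Finset.mem_univ _) hh
  · rw [dif_neg h]
    apply Finset.sum_eq_zero
    intro b _
    rw [cX, if_neg, zero_mul]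
    rintro ⟨h1, h2⟩
    apply h
    have hbe : (b : ℕ × ℕ) = hcell (hk (c' : ℕ × ℕ)) (rsd (c' : ℕ × ℕ) + 1) := by
      conv_lhs => rw [cell_eq_hcell (c := (b : ℕ × ℕ))]
      congr 1
      · exact h1.symm
      · omega
    rw [← hbe]
    exact b.2

lemma XT_apply (f : V μ) (c' : ↥μ.cells) :
    XT μ f c' = if h : hcell (hk (c' : ℕ × ℕ)) (rsd (c' : ℕ × ℕ) - 1) ∈ μ.cells
      then f ⟨_, h⟩ else 0 := by
  show (∑ c : ↥μ.cells, cX (c' : ℕ × ℕ) (c : ℕ × ℕ) * f c) = _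
  by_cases h : hcell (hk (c' : ℕ × ℕ)) (rsd (c' : ℕ × ℕ) - 1) ∈ μ.cells
  · rw [dif_pos h, Finset.sum_eq_single (⟨_, h⟩ : ↥μ.cells)]
    · rw [cX, if_pos, one_mul]
      constructor
      · rw [hk_hcell]
      · rw [rsd_hcell]
    · intro b _ hb
      rw [cX, if_neg, zero_mul]
      rintro ⟨h1, h2⟩
      apply hb
      apply Subtype.ext
      show (b : ℕ × ℕ) = hcell (hk (c' : ℕ × ℕ)) (rsd (c' : ℕ × ℕ) - 1)
      conv_lhs => rw [cell_eq_hcell (c := (b : ℕ × ℕ))]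
      rw [h1, h2]
    · intro hh; exact absurd (Finset.mem_univ _) hh
  · rw [dif_neg h]
    apply Finset.sum_eq_zero
    intro b _
    rw [cX, if_neg, zero_mul]
    rintro ⟨h1, h2⟩
    apply h
    have hbe : (b : ℕ × ℕ) = hcell (hk (c' : ℕ × ℕ)) (rsd (c' : ℕ × ℕ) - 1) := by
      conv_lhs => rw [cell_eq_hcell (c := (b : ℕ × ℕ))]
      rw [h1, h2]
    rw [← hbe]
    exact b.2

/-- weight vector `x(1)` shifted to level `n ≤ 0`. -/
noncomputable def wv (ℓ : ℕ) (θ : ZMod ℓ → ℂ) (μ : YoungDiagram) (n : ℤ) : V μ :=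
  fun c' => if rsd (c' : ℕ × ℕ) = n then -(beta ℓ θ μ (hk (c' : ℕ × ℕ))) else 0

/-- dual weight vector `y` shifted to level `n ≥ 0`. -/
noncomputable def wt (μ : YoungDiagram) (n : ℤ) : V μ :=
  fun c' => if rsd (c' : ℕ × ℕ) = n then 1 else 0

lemma wv_zero : wv ℓ θ μ 0 = xmap ℓ θ μ 1 := by
  funext c'
  show _ = (if rsd (c' : ℕ × ℕ) = 0 then -(beta ℓ θ μ (hk (c' : ℕ × ℕ))) * 1 else 0)
  rw [wv, mul_one]

lemma wv_apply (n : ℤ) (c' : ↥μ.cells) :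
    wv ℓ θ μ n c' = if rsd (c' : ℕ × ℕ) = n then -(beta ℓ θ μ (hk (c' : ℕ × ℕ))) else 0 := rfl

lemma wt_apply (n : ℤ) (c' : ↥μ.cells) :
    wt μ n c' = if rsd (c' : ℕ × ℕ) = n then 1 else 0 := rfl

lemma Xmap_wv {n : ℤ} (hn : n ≤ 0) : Xmap μ (wv ℓ θ μ n) = wv ℓ θ μ (n - 1) := by
  funext c'
  rw [Xmap_apply]
  by_cases h : rsd (c' : ℕ × ℕ) = n - 1
  · have hup : hcell (hk (c' : ℕ × ℕ)) (rsd (c' : ℕ × ℕ) + 1) ∈ μ.cells := by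
      rw [mem_cells_iff_hcell c'.2]
      have h1 := neg_leg_le_rsd ((YoungDiagram.mem_cells _).mp c'.2)
      have h2 := arm_nonneg (hk_mem ((YoungDiagram.mem_cells _).mp c'.2))
      omega
    rw [dif_pos hup]
    rw [wv_apply, wv_apply]
    rw [if_pos (by show rsd (hcell _ _) = n; rw [rsd_hcell]; omega), if_pos h]
    show -(beta ℓ θ μ (hk (hcell (hk (c' : ℕ × ℕ)) (rsd (c' : ℕ × ℕ) + 1)))) = _
    rw [hk_hcell]
  · rw [wv_apply, if_neg h]
    by_cases hup : hcell (hk (c' : ℕ × ℕ)) (rsd (c' : ℕ × ℕ) + 1) ∈ μ.cells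
    · rw [dif_pos hup, wv_apply]
      rw [if_neg (by show ¬ rsd (hcell _ _) = n; rw [rsd_hcell]; omega)]
    · rw [dif_neg hup]

lemma XT_wt {n : ℤ} (hn : 0 ≤ n) : XT μ (wt μ n) = wt μ (n + 1) := by
  funext c'
  rw [XT_apply]
  by_cases h : rsd (c' : ℕ × ℕ) = n + 1
  · have hup : hcell (hk (c' : ℕ × ℕ)) (rsd (c' : ℕ × ℕ) - 1) ∈ μ.cells := by
      rw [mem_cells_iff_hcell c'.2]
      have h1 := neg_leg_le_rsd ((YoungDiagram.mem_cells _).mp c'.2)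
      have h2 := rsd_le_arm ((YoungDiagram.mem_cells _).mp c'.2)
      have h3 := leg_nonneg (hk_mem ((YoungDiagram.mem_cells _).mp c'.2))
      omega
    rw [dif_pos hup]
    rw [wt_apply, wt_apply]
    rw [if_pos (by show rsd (hcell _ _) = n; rw [rsd_hcell]; omega), if_pos h]
  · rw [wt_apply, if_neg h]
    by_cases hup : hcell (hk (c' : ℕ × ℕ)) (rsd (c' : ℕ × ℕ) - 1) ∈ μ.cells
    · rw [dif_pos hup, wt_apply]
      rw [if_neg (by show ¬ rsd (hcell _ _) = n; rw [rsd_hcell]; omega)]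
    · rw [dif_neg hup]

lemma wv_eq_sum (n : ℤ) :
    wv ℓ θ μ n = ∑ t ∈ lvl μ n, (-(beta ℓ θ μ (hk (t : ℕ × ℕ)))) • sgl μ (t : ℕ × ℕ) := by
  funext c'
  rw [sum_sgl_apply, wv_apply]
  by_cases h : rsd (c' : ℕ × ℕ) = n
  · rw [if_pos h, if_pos (mem_lvl.mpr h)]
  · rw [if_neg h, if_neg (fun hh => h (mem_lvl.mp hh))]

lemma wt_eq_sum (n : ℤ) :
    wt μ n = ∑ t ∈ lvl μ n, (1 : ℂ) • sgl μ (t : ℕ × ℕ) := by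
  funext c'
  rw [sum_sgl_apply, wt_apply]
  by_cases h : rsd (c' : ℕ × ℕ) = n
  · rw [if_pos h, if_pos (mem_lvl.mpr h)]
  · rw [if_neg h, if_neg (fun hh => h (mem_lvl.mp hh))]


end

section


open Finset

variable {ℓ : ℕ} {θ : ZMod ℓ → ℂ} {μ : YoungDiagram}

lemma Ymap_sgl_neg {c₀ : ℕ × ℕ} (hc₀ : c₀ ∈ μ.cells) {n : ℤ} (hn : n ≤ 0)
    (hr : rsd c₀ = n - 1) :
    Ymap ℓ θ μ (sgl μ c₀)
      = Ssum ℓ θ (-(leg μ (hk c₀))) (n-1) • sgl μ (hcell (hk c₀) n)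
        + ∑ t ∈ (lvl μ n).filter (fun t : ↥μ.cells => hk c₀ < hk (t : ℕ × ℕ)),
            beta ℓ θ μ (hk (t : ℕ × ℕ)) • sgl μ (t : ℕ × ℕ) := by
  have hY : Ymap ℓ θ μ (sgl μ c₀) = fun c' : ↥μ.cells => cY ℓ θ μ c₀ (c' : ℕ × ℕ) :=
    matMap_sgl _ hc₀
  rw [hY]
  funext c'
  rw [Pi.add_apply, smul_sgl_apply, sum_sgl_apply]
  by_cases h1 : rsd (c' : ℕ × ℕ) = n
  · by_cases h2 : hk (c' : ℕ × ℕ) = hk c₀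
    · have hce : (c' : ℕ × ℕ) = hcell (hk c₀) n := by
        conv_lhs => rw [cell_eq_hcell (c := (c' : ℕ × ℕ))]
        rw [h2, h1]
      rw [if_pos hce, if_neg, add_zero]
      · show cY ℓ θ μ c₀ (c' : ℕ × ℕ) = _
        rw [cY, if_pos (by omega), if_pos (by omega), if_pos h2, hr]
      · intro hmem
        rw [Finset.mem_filter] at hmem
        omega
    · by_cases h3 : hk c₀ < hk (c' : ℕ × ℕ)
      · rw [if_neg, if_pos, zero_add]
        · show cY ℓ θ μ c₀ (c' : ℕ × ℕ) = _
          rw [cY, if_pos (by omega), if_pos (by omega), if_neg h2, if_pos h3]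
        · exact Finset.mem_filter.mpr ⟨mem_lvl.mpr h1, h3⟩
        · intro hce; apply h2; rw [hce, hk_hcell]
      · rw [if_neg, if_neg, add_zero]
        · show cY ℓ θ μ c₀ (c' : ℕ × ℕ) = _
          rw [cY, if_pos (by omega), if_pos (by omega), if_neg h2, if_neg h3]
        · intro hmem; rw [Finset.mem_filter] at hmem; exact h3 hmem.2
        · intro hce; apply h2; rw [hce, hk_hcell]
  · rw [if_neg, if_neg, add_zero]
    · show cY ℓ θ μ c₀ (c' : ℕ × ℕ) = _
      rw [cY, if_neg (by omega)]
    · intro hmem; rw [Finset.mem_filter, mem_lvl] at hmem; exact h1 hmem.1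
    · intro hce; apply h1; rw [hce, rsd_hcell]

lemma Ymap_sgl_pos {c₀ : ℕ × ℕ} (hc₀ : c₀ ∈ μ.cells) {n : ℤ} (hn : 1 ≤ n)
    (hr : rsd c₀ = n - 1) :
    Ymap ℓ θ μ (sgl μ c₀)
      = (-(Ssum ℓ θ n (arm μ (hk c₀)))) • sgl μ (hcell (hk c₀) n)
        + ∑ t ∈ (lvl μ n).filter (fun t : ↥μ.cells => hk (t : ℕ × ℕ) < hk c₀),
            (-(beta ℓ θ μ (hk (t : ℕ × ℕ)))) • sgl μ (t : ℕ × ℕ) := by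
  have hY : Ymap ℓ θ μ (sgl μ c₀) = fun c' : ↥μ.cells => cY ℓ θ μ c₀ (c' : ℕ × ℕ) :=
    matMap_sgl _ hc₀
  rw [hY]
  funext c'
  rw [Pi.add_apply, smul_sgl_apply, sum_sgl_apply]
  by_cases h1 : rsd (c' : ℕ × ℕ) = n
  · by_cases h2 : hk (c' : ℕ × ℕ) = hk c₀
    · have hce : (c' : ℕ × ℕ) = hcell (hk c₀) n := by
        conv_lhs => rw [cell_eq_hcell (c := (c' : ℕ × ℕ))]
        rw [h2, h1]
      rw [if_pos hce, if_neg, add_zero]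
      · show cY ℓ θ μ c₀ (c' : ℕ × ℕ) = _
        rw [cY, if_pos (by omega), if_neg (by omega), if_pos h2,
          show rsd c₀ + 1 = n by omega]
      · intro hmem
        rw [Finset.mem_filter] at hmem
        omega
    · by_cases h3 : hk (c' : ℕ × ℕ) < hk c₀
      · rw [if_neg, if_pos, zero_add]
        · show cY ℓ θ μ c₀ (c' : ℕ × ℕ) = _
          rw [cY, if_pos (by omega), if_neg (by omega), if_neg h2, if_pos h3]
        · exact Finset.mem_filter.mpr ⟨mem_lvl.mpr h1, h3⟩
        · intro hce; apply h2; rw [hce, hk_hcell]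
      · rw [if_neg, if_neg, add_zero]
        · show cY ℓ θ μ c₀ (c' : ℕ × ℕ) = _
          rw [cY, if_pos (by omega), if_neg (by omega), if_neg h2, if_neg h3]
        · intro hmem; rw [Finset.mem_filter] at hmem; exact h3 hmem.2
        · intro hce; apply h2; rw [hce, hk_hcell]
  · rw [if_neg, if_neg, add_zero]
    · show cY ℓ θ μ c₀ (c' : ℕ × ℕ) = _
      rw [cY, if_neg (by omega)]
    · intro hmem; rw [Finset.mem_filter, mem_lvl] at hmem; exact h1 hmem.1
    · intro hce; apply h1; rw [hce, rsd_hcell]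

lemma YT_sgl_neg {c₀ : ℕ × ℕ} (hc₀ : c₀ ∈ μ.cells) {n : ℤ} (hn : n ≤ -1)
    (hr : rsd c₀ = n + 1) :
    YT ℓ θ μ (sgl μ c₀)
      = Ssum ℓ θ (-(leg μ (hk c₀))) n • sgl μ (hcell (hk c₀) n)
        + ∑ t ∈ (lvl μ n).filter (fun t : ↥μ.cells => hk (t : ℕ × ℕ) < hk c₀),
            beta ℓ θ μ (hk c₀) • sgl μ (t : ℕ × ℕ) := by
  have hY : YT ℓ θ μ (sgl μ c₀) = fun c' : ↥μ.cells => cY ℓ θ μ (c' : ℕ × ℕ) c₀ :=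
    matMap_sgl _ hc₀
  rw [hY]
  funext c'
  rw [Pi.add_apply, smul_sgl_apply, sum_sgl_apply]
  by_cases h1 : rsd (c' : ℕ × ℕ) = n
  · by_cases h2 : hk c₀ = hk (c' : ℕ × ℕ)
    · have hce : (c' : ℕ × ℕ) = hcell (hk c₀) n := by
        conv_lhs => rw [cell_eq_hcell (c := (c' : ℕ × ℕ))]
        rw [← h2, h1]
      rw [if_pos hce, if_neg, add_zero]
      · show cY ℓ θ μ (c' : ℕ × ℕ) c₀ = _
        rw [cY, if_pos (by omega), if_pos (by omega), if_pos h2, h2, h1]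
      · intro hmem
        rw [Finset.mem_filter] at hmem
        omega
    · by_cases h3 : hk (c' : ℕ × ℕ) < hk c₀
      · rw [if_neg, if_pos, zero_add]
        · show cY ℓ θ μ (c' : ℕ × ℕ) c₀ = _
          rw [cY, if_pos (by omega), if_pos (by omega), if_neg h2, if_pos h3]
        · exact Finset.mem_filter.mpr ⟨mem_lvl.mpr h1, h3⟩
        · intro hce; apply h2; rw [hce, hk_hcell]
      · rw [if_neg, if_neg, add_zero]
        · show cY ℓ θ μ (c' : ℕ × ℕ) c₀ = _
          rw [cY, if_pos (by omega), if_pos (by omega), if_neg h2, if_neg h3]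
        · intro hmem; rw [Finset.mem_filter] at hmem; exact h3 hmem.2
        · intro hce; apply h2; rw [hce, hk_hcell]
  · rw [if_neg, if_neg, add_zero]
    · show cY ℓ θ μ (c' : ℕ × ℕ) c₀ = _
      rw [cY, if_neg (by omega)]
    · intro hmem; rw [Finset.mem_filter, mem_lvl] at hmem; exact h1 hmem.1
    · intro hce; apply h1; rw [hce, rsd_hcell]

lemma YT_sgl_pos {c₀ : ℕ × ℕ} (hc₀ : c₀ ∈ μ.cells) {n : ℤ} (hn : 0 ≤ n)
    (hr : rsd c₀ = n + 1) :
    YT ℓ θ μ (sgl μ c₀)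
      = (-(Ssum ℓ θ (n+1) (arm μ (hk c₀)))) • sgl μ (hcell (hk c₀) n)
        + ∑ t ∈ (lvl μ n).filter (fun t : ↥μ.cells => hk c₀ < hk (t : ℕ × ℕ)),
            (-(beta ℓ θ μ (hk c₀))) • sgl μ (t : ℕ × ℕ) := by
  have hY : YT ℓ θ μ (sgl μ c₀) = fun c' : ↥μ.cells => cY ℓ θ μ (c' : ℕ × ℕ) c₀ :=
    matMap_sgl _ hc₀
  rw [hY]
  funext c'
  rw [Pi.add_apply, smul_sgl_apply, sum_sgl_apply]
  by_cases h1 : rsd (c' : ℕ × ℕ) = n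
  · by_cases h2 : hk c₀ = hk (c' : ℕ × ℕ)
    · have hce : (c' : ℕ × ℕ) = hcell (hk c₀) n := by
        conv_lhs => rw [cell_eq_hcell (c := (c' : ℕ × ℕ))]
        rw [← h2, h1]
      rw [if_pos hce, if_neg, add_zero]
      · show cY ℓ θ μ (c' : ℕ × ℕ) c₀ = _
        rw [cY, if_pos (by omega), if_neg (by omega), if_pos h2, h2, h1,
          show n + 1 = n + 1 from rfl]
      · intro hmem
        rw [Finset.mem_filter] at hmem
        omega
    · by_cases h3 : hk c₀ < hk (c' : ℕ × ℕ)
      · rw [if_neg, if_pos, zero_add]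
        · show cY ℓ θ μ (c' : ℕ × ℕ) c₀ = _
          rw [cY, if_pos (by omega), if_neg (by omega), if_neg h2, if_pos h3]
        · exact Finset.mem_filter.mpr ⟨mem_lvl.mpr h1, h3⟩
        · intro hce; apply h2; rw [hce, hk_hcell]
      · rw [if_neg, if_neg, add_zero]
        · show cY ℓ θ μ (c' : ℕ × ℕ) c₀ = _
          rw [cY, if_pos (by omega), if_neg (by omega), if_neg h2, if_neg h3]
        · intro hmem; rw [Finset.mem_filter] at hmem; exact h3 hmem.2
        · intro hce; apply h2; rw [hce, hk_hcell]
  · rw [if_neg, if_neg, add_zero]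
    · show cY ℓ θ μ (c' : ℕ × ℕ) c₀ = _
      rw [cY, if_neg (by omega)]
    · intro hmem; rw [Finset.mem_filter, mem_lvl] at hmem; exact h1 hmem.1
    · intro hce; apply h1; rw [hce, rsd_hcell]


end

section


open Finset

variable {ℓ : ℕ} {J : Set (ZMod ℓ)} {θ : ZMod ℓ → ℂ} {μ : YoungDiagram}

lemma hcell_of_lvl {n : ℤ} {t : ↥μ.cells} (ht : t ∈ lvl μ n) :
    hcell (hk (t : ℕ × ℕ)) n = (t : ℕ × ℕ) := by
  rw [← mem_lvl.mp ht]
  exact (cell_eq_hcell).symm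

lemma hk_inj_lvl {n : ℤ} {s t : ↥μ.cells} (hs : s ∈ lvl μ n) (ht : t ∈ lvl μ n)
    (h : hk (s : ℕ × ℕ) = hk (t : ℕ × ℕ)) : s = t := by
  apply Subtype.ext
  rw [← hcell_of_lvl hs, ← hcell_of_lvl ht, h]

lemma lvl_sum_split {n : ℤ} {t : ↥μ.cells} (ht : t ∈ lvl μ n) (g : ↥μ.cells → V μ) :
    ∑ s ∈ lvl μ n, g s
      = g t + (∑ s ∈ (lvl μ n).filter (fun s : ↥μ.cells => hk (s : ℕ × ℕ) < hk (t : ℕ × ℕ)), g s)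
        + ∑ s ∈ (lvl μ n).filter (fun s : ↥μ.cells => hk (t : ℕ × ℕ) < hk (s : ℕ × ℕ)), g s := by
  have herase : (lvl μ n).erase t
      = (lvl μ n).filter (fun s : ↥μ.cells => hk (s : ℕ × ℕ) < hk (t : ℕ × ℕ))
        ∪ (lvl μ n).filter (fun s : ↥μ.cells => hk (t : ℕ × ℕ) < hk (s : ℕ × ℕ)) := by
    ext s
    rw [Finset.mem_erase, Finset.mem_union, Finset.mem_filter, Finset.mem_filter]
    constructor
    · rintro ⟨hne, hmem⟩
      rcases Nat.lt_or_ge (hk (s : ℕ × ℕ)) (hk (t : ℕ × ℕ)) with h | h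
      · exact Or.inl ⟨hmem, h⟩
      · rcases Nat.eq_or_lt_of_le h with h' | h'
        · exact absurd (hk_inj_lvl hmem ht h'.symm) hne
        · exact Or.inr ⟨hmem, h'⟩
    · rintro (⟨hmem, h⟩ | ⟨hmem, h⟩)
      · exact ⟨fun he => by rw [he] at h; exact lt_irrefl _ h, hmem⟩
      · exact ⟨fun he => by rw [he] at h; exact lt_irrefl _ h, hmem⟩
  have hdisj : Disjoint
      ((lvl μ n).filter (fun s : ↥μ.cells => hk (s : ℕ × ℕ) < hk (t : ℕ × ℕ)))
      ((lvl μ n).filter (fun s : ↥μ.cells => hk (t : ℕ × ℕ) < hk (s : ℕ × ℕ))) := by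
    rw [Finset.disjoint_left]
    intro s hs hs'
    rw [Finset.mem_filter] at hs hs'
    omega
  rw [← Finset.add_sum_erase _ g ht, herase, Finset.sum_union hdisj]
  abel

/-- Negative-side generation step. -/
lemma level_neg [NeZero ℓ] (hℓ : 2 ≤ ℓ) (hst : JStandard ℓ J θ)
    (ha : ∑ i : ZMod ℓ, θ i ≠ 0) (hμ : IsJCore ℓ J μ) {n : ℤ} (hn : n ≤ 0)
    (C : Submodule ℂ (V μ))
    (hYC : ∀ f ∈ C, Ymap ℓ θ μ f ∈ C)
    (hwv : wv ℓ θ μ n ∈ C)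
    (hprev : ∀ b : ↥μ.cells, rsd (b : ℕ × ℕ) = n - 1 → sgl μ (b : ℕ × ℕ) ∈ C) :
    ∀ t ∈ lvl μ n, sgl μ (t : ℕ × ℕ) ∈ C := by
  classical
  -- basic facts for cells at this level
  have hmemμ : ∀ t : ↥μ.cells, (t : ℕ × ℕ) ∈ μ := fun t => (YoungDiagram.mem_cells _).mp t.2
  have harm0 : ∀ t : ↥μ.cells, 0 ≤ arm μ (hk (t : ℕ × ℕ)) :=
    fun t => arm_nonneg (hk_mem (hmemμ t))
  have hlegb : ∀ t ∈ lvl μ n, -(leg μ (hk (t : ℕ × ℕ))) ≤ n := by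
    intro t ht
    have := neg_leg_le_rsd (hmemμ t)
    rw [mem_lvl.mp ht] at this
    exact this
  -- the Y-image of the cell below an "old" hook
  have hYform : ∀ t ∈ lvl μ n, ∀ hb : hcell (hk (t : ℕ × ℕ)) (n-1) ∈ μ.cells,
      Ymap ℓ θ μ (sgl μ (hcell (hk (t : ℕ × ℕ)) (n-1)))
        = Ssum ℓ θ (-(leg μ (hk (t : ℕ × ℕ)))) (n-1) • sgl μ (t : ℕ × ℕ)
          + ∑ s ∈ (lvl μ n).filter (fun s : ↥μ.cells => hk (t : ℕ × ℕ) < hk (s : ℕ × ℕ)),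
              beta ℓ θ μ (hk (s : ℕ × ℕ)) • sgl μ (s : ℕ × ℕ) := by
    intro t ht hb
    have h1 := Ymap_sgl_neg (θ := θ) hb hn (by rw [rsd_hcell])
    rw [hk_hcell, hcell_of_lvl ht] at h1
    exact h1
  -- the image of a below-cell is in C
  have hYmem : ∀ t ∈ lvl μ n, ∀ hb : hcell (hk (t : ℕ × ℕ)) (n-1) ∈ μ.cells,
      Ymap ℓ θ μ (sgl μ (hcell (hk (t : ℕ × ℕ)) (n-1))) ∈ C := by
    intro t ht hb
    exact hYC _ (hprev ⟨_, hb⟩ (by exact rsd_hcell _ _))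
  -- the weight vector identity
  have hnwv : ((-1 : ℂ) • wv ℓ θ μ n)
      = ∑ s ∈ lvl μ n, beta ℓ θ μ (hk (s : ℕ × ℕ)) • sgl μ (s : ℕ × ℕ) := by
    rw [wv_eq_sum, Finset.smul_sum]
    exact Finset.sum_congr rfl fun s _ => by rw [smul_smul]; ring_nf
  have hnwvC : ((-1 : ℂ) • wv ℓ θ μ n) ∈ C := Submodule.smul_mem _ _ hwv
  -- old-ness facts
  have holdiff : ∀ t ∈ lvl μ n,
      (hcell (hk (t : ℕ × ℕ)) (n-1) ∈ μ.cells ↔ -(leg μ (hk (t : ℕ × ℕ))) ≤ n - 1) := by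
    intro t ht
    rw [mem_cells_iff_hcell t.2]
    have := harm0 t
    omega
  by_cases hall : ∀ t ∈ lvl μ n, hcell (hk (t : ℕ × ℕ)) (n-1) ∈ μ.cells →
      Ssum ℓ θ n (arm μ (hk (t : ℕ × ℕ))) ≠ 0
  · -- Case 1: ascending chain over the whole level
    apply chain_asc C (lvl μ n)
      (fun t => if hcell (hk (t : ℕ × ℕ)) (n-1) ∈ μ.cells
        then Ssum ℓ θ n (arm μ (hk (t : ℕ × ℕ))) else beta ℓ θ μ (hk (t : ℕ × ℕ)))
      (fun _ s => beta ℓ θ μ (hk (s : ℕ × ℕ)))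
    · intro t ht
      by_cases hb : hcell (hk (t : ℕ × ℕ)) (n-1) ∈ μ.cells
      · rw [if_pos hb]; exact hall t ht hb
      · rw [if_neg hb]; exact beta_ne_zero hℓ hst ha hμ (hk_mem (hmemμ t))
    · intro t ht
      by_cases hb : hcell (hk (t : ℕ × ℕ)) (n-1) ∈ μ.cells
      · rw [if_pos hb]
        have hmem : ((-1 : ℂ) • wv ℓ θ μ n
            - Ymap ℓ θ μ (sgl μ (hcell (hk (t : ℕ × ℕ)) (n-1)))) ∈ C :=
          Submodule.sub_mem _ hnwvC (hYmem t ht hb)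
        have heq : ((-1 : ℂ) • wv ℓ θ μ n
            - Ymap ℓ θ μ (sgl μ (hcell (hk (t : ℕ × ℕ)) (n-1))))
            = Ssum ℓ θ n (arm μ (hk (t : ℕ × ℕ))) • sgl μ (t : ℕ × ℕ)
              + ∑ s ∈ (lvl μ n).filter (fun s : ↥μ.cells => hk (s : ℕ × ℕ) < hk (t : ℕ × ℕ)),
                  beta ℓ θ μ (hk (s : ℕ × ℕ)) • sgl μ (s : ℕ × ℕ) := by
          rw [hnwv, hYform t ht hb,
            lvl_sum_split ht (fun s => beta ℓ θ μ (hk (s : ℕ × ℕ)) • sgl μ (s : ℕ × ℕ)),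
            beta_split (hk (t : ℕ × ℕ)) (m := n - 1)
              (by rw [holdiff t ht] at hb; omega) (by have := harm0 t; omega),
            show n - 1 + 1 = n from by ring, add_smul]
          abel
        rw [← heq]
        exact hmem
      · rw [if_neg hb]
        have heq : ((-1 : ℂ) • wv ℓ θ μ n)
            = beta ℓ θ μ (hk (t : ℕ × ℕ)) • sgl μ (t : ℕ × ℕ)
              + ∑ s ∈ (lvl μ n).filter (fun s : ↥μ.cells => hk (s : ℕ × ℕ) < hk (t : ℕ × ℕ)),
                  beta ℓ θ μ (hk (s : ℕ × ℕ)) • sgl μ (s : ℕ × ℕ) := by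
          rw [hnwv,
            lvl_sum_split ht (fun s => beta ℓ θ μ (hk (s : ℕ × ℕ)) • sgl μ (s : ℕ × ℕ))]
          have hgt : (lvl μ n).filter
              (fun s : ↥μ.cells => hk (t : ℕ × ℕ) < hk (s : ℕ × ℕ)) = ∅ := by
            rw [Finset.filter_eq_empty_iff]
            intro s hs
            -- t is new: leg (hk t) = -n ; s distinct would have smaller leg
            have htnew : -(leg μ (hk (t : ℕ × ℕ))) = n := by
              rw [holdiff t ht] at hb
              have := hlegb t ht
              omega
            intro hlt
            have := leg_strict_anti (μ := μ) hlt
            have := hlegb s hs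
            omega
          rw [hgt, Finset.sum_empty, add_zero]
        rw [← heq]
        exact hnwvC
  · -- Case 2: some suffix sum vanishes; descending chain
    push_neg at hall
    obtain ⟨t₀, ht₀, hb₀, hT₀⟩ := hall
    -- all cells at this level are old
    have hold : ∀ t ∈ lvl μ n, hcell (hk (t : ℕ × ℕ)) (n-1) ∈ μ.cells := by
      intro t ht
      by_contra hb
      have htnew : -(leg μ (hk (t : ℕ × ℕ))) = n := by
        rw [holdiff t ht] at hb
        have := hlegb t ht
        omega
      have hb₀' : -(leg μ (hk (t₀ : ℕ × ℕ))) ≤ n - 1 := (holdiff t₀ ht₀).mp hb₀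
      have hkle : hk (t₀ : ℕ × ℕ) ≤ hk (t : ℕ × ℕ) := by
        by_contra hlt
        push_neg at hlt
        have := leg_anti (μ := μ) (le_of_lt hlt)
        omega
      apply hook_subJ_false hμ (hk_mem (hmemμ t))
      intro x hx1 hx2
      have harmle := arm_anti (μ := μ) hkle
      apply vanishing_interval hℓ hst ha (p := n) (q := arm μ (hk (t₀ : ℕ × ℕ)))
        (by have := harm0 t₀; omega) hT₀ x (by omega) (by omega)
    -- all prefix sums are nonzero
    have hS : ∀ t ∈ lvl μ n, Ssum ℓ θ (-(leg μ (hk (t : ℕ × ℕ)))) (n-1) ≠ 0 := by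
      intro t ht hS0
      apply pair_rule hℓ hst ha hμ (hk_mem (hmemμ t₀)) (hk_mem (hmemμ t)) (m := n - 1)
        ((holdiff t ht).mp (hold t ht)) (by have := harm0 t₀; omega) hS0
      rw [show n - 1 + 1 = n from by ring]
      exact hT₀
    apply chain_desc C (lvl μ n)
      (fun t => Ssum ℓ θ (-(leg μ (hk (t : ℕ × ℕ)))) (n-1))
      (fun _ s => beta ℓ θ μ (hk (s : ℕ × ℕ)))
    · exact hS
    · intro t ht
      have := hYmem t ht (hold t ht)
      rwa [hYform t ht (hold t ht)] at this


end

section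


open Finset

variable {ℓ : ℕ} {J : Set (ZMod ℓ)} {θ : ZMod ℓ → ℂ} {μ : YoungDiagram}

/-- Positive-side generation step. -/
lemma level_pos [NeZero ℓ] (hℓ : 2 ≤ ℓ) (hst : JStandard ℓ J θ)
    (ha : ∑ i : ZMod ℓ, θ i ≠ 0) (hμ : IsJCore ℓ J μ) {n : ℤ} (hn : 1 ≤ n)
    (C : Submodule ℂ (V μ))
    (hYC : ∀ f ∈ C, Ymap ℓ θ μ f ∈ C)
    (hprev : ∀ b : ↥μ.cells, rsd (b : ℕ × ℕ) = n - 1 → sgl μ (b : ℕ × ℕ) ∈ C) :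
    ∀ t ∈ lvl μ n, sgl μ (t : ℕ × ℕ) ∈ C := by
  classical
  have hmemμ : ∀ t : ↥μ.cells, (t : ℕ × ℕ) ∈ μ := fun t => (YoungDiagram.mem_cells _).mp t.2
  have hleg0 : ∀ t : ↥μ.cells, 0 ≤ leg μ (hk (t : ℕ × ℕ)) :=
    fun t => leg_nonneg (hk_mem (hmemμ t))
  have harmb : ∀ t ∈ lvl μ n, n ≤ arm μ (hk (t : ℕ × ℕ)) := by
    intro t ht
    have := rsd_le_arm (hmemμ t)
    rw [mem_lvl.mp ht] at this
    exact this
  have hbmem : ∀ t ∈ lvl μ n, hcell (hk (t : ℕ × ℕ)) (n-1) ∈ μ.cells := by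
    intro t ht
    rw [mem_cells_iff_hcell t.2]
    have := hleg0 t
    have := harmb t ht
    omega
  have hYform : ∀ t ∈ lvl μ n,
      Ymap ℓ θ μ (sgl μ (hcell (hk (t : ℕ × ℕ)) (n-1)))
        = (-(Ssum ℓ θ n (arm μ (hk (t : ℕ × ℕ))))) • sgl μ (t : ℕ × ℕ)
          + ∑ s ∈ (lvl μ n).filter (fun s : ↥μ.cells => hk (s : ℕ × ℕ) < hk (t : ℕ × ℕ)),
              (-(beta ℓ θ μ (hk (s : ℕ × ℕ)))) • sgl μ (s : ℕ × ℕ) := by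
    intro t ht
    have h1 := Ymap_sgl_pos (θ := θ) (hbmem t ht) hn (by rw [rsd_hcell])
    rw [hk_hcell, hcell_of_lvl ht] at h1
    exact h1
  have hYmem : ∀ t ∈ lvl μ n,
      Ymap ℓ θ μ (sgl μ (hcell (hk (t : ℕ × ℕ)) (n-1))) ∈ C := by
    intro t ht
    exact hYC _ (hprev ⟨_, hbmem t ht⟩ (by exact rsd_hcell _ _))
  by_cases hall : ∀ t ∈ lvl μ n, Ssum ℓ θ n (arm μ (hk (t : ℕ × ℕ))) ≠ 0
  · -- ascending chain
    apply chain_asc C (lvl μ n)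
      (fun t => -(Ssum ℓ θ n (arm μ (hk (t : ℕ × ℕ)))))
      (fun _ s => -(beta ℓ θ μ (hk (s : ℕ × ℕ))))
    · intro t ht
      exact neg_ne_zero.mpr (hall t ht)
    · intro t ht
      have := hYmem t ht
      rwa [hYform t ht] at this
  · push_neg at hall
    obtain ⟨t₀, ht₀, hT₀⟩ := hall
    -- produce the leaving hook H with arm = n - 1
    obtain ⟨H, hH, harmH⟩ := arm_walk hμ (hk_mem (hmemμ t₀)) (m := n - 1) (by omega)
      (by rw [show n - 1 + 1 = n from by ring]; exact harmb t₀ ht₀)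
      (fun x hx1 hx2 => vanishing_interval hℓ hst ha
        (p := n) (q := arm μ (hk (t₀ : ℕ × ℕ))) (harmb t₀ ht₀) hT₀ x (by omega) hx2)
    have hbH : hcell H (n-1) ∈ μ.cells := by
      rw [YoungDiagram.mem_cells]
      rw [hcell_mem_iff hH]
      have := leg_nonneg hH
      omega
    have hWmem : Ymap ℓ θ μ (sgl μ (hcell H (n-1))) ∈ C :=
      hYC _ (hprev ⟨_, hbH⟩ (by exact rsd_hcell _ _))
    have hWform : Ymap ℓ θ μ (sgl μ (hcell H (n-1)))
        = ∑ s ∈ lvl μ n, (-(beta ℓ θ μ (hk (s : ℕ × ℕ)))) • sgl μ (s : ℕ × ℕ) := by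
      have h1 := Ymap_sgl_pos (θ := θ) hbH hn (by rw [rsd_hcell])
      rw [hk_hcell] at h1
      rw [h1, harmH, Ssum_empty (by omega), neg_zero, zero_smul, zero_add]
      congr 1
      apply Finset.filter_true_of_mem
      intro s hs
      by_contra hge
      push_neg at hge
      have := arm_anti (μ := μ) hge
      have := harmb s hs
      omega
    -- all prefix sums nonzero
    have hS : ∀ t ∈ lvl μ n, Ssum ℓ θ (-(leg μ (hk (t : ℕ × ℕ)))) (n-1) ≠ 0 := by
      intro t ht hS0
      apply pair_rule hℓ hst ha hμ (hk_mem (hmemμ t₀)) (hk_mem (hmemμ t)) (m := n - 1)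
        (by have := hleg0 t; omega) (by have := harmb t₀ ht₀; omega) hS0
      rw [show n - 1 + 1 = n from by ring]
      exact hT₀
    apply chain_desc C (lvl μ n)
      (fun t => -(Ssum ℓ θ (-(leg μ (hk (t : ℕ × ℕ)))) (n-1)))
      (fun _ s => -(beta ℓ θ μ (hk (s : ℕ × ℕ))))
    · intro t ht
      exact neg_ne_zero.mpr (hS t ht)
    · intro t ht
      have hmem : (Ymap ℓ θ μ (sgl μ (hcell H (n-1)))
          - Ymap ℓ θ μ (sgl μ (hcell (hk (t : ℕ × ℕ)) (n-1)))) ∈ C :=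
        Submodule.sub_mem _ hWmem (hYmem t ht)
      have heq : (Ymap ℓ θ μ (sgl μ (hcell H (n-1)))
          - Ymap ℓ θ μ (sgl μ (hcell (hk (t : ℕ × ℕ)) (n-1))))
          = (-(Ssum ℓ θ (-(leg μ (hk (t : ℕ × ℕ)))) (n-1))) • sgl μ (t : ℕ × ℕ)
            + ∑ s ∈ (lvl μ n).filter (fun s : ↥μ.cells => hk (t : ℕ × ℕ) < hk (s : ℕ × ℕ)),
                (-(beta ℓ θ μ (hk (s : ℕ × ℕ)))) • sgl μ (s : ℕ × ℕ) := by
        rw [hWform, hYform t ht,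
          lvl_sum_split ht (fun s => (-(beta ℓ θ μ (hk (s : ℕ × ℕ)))) • sgl μ (s : ℕ × ℕ)),
          beta_split (hk (t : ℕ × ℕ)) (m := n - 1)
            (by have := hleg0 t; omega) (by have := harmb t ht; omega),
          show n - 1 + 1 = n from by ring, neg_add, add_smul]
        abel
      rw [← heq]
      exact hmem

/-- Negative-side cogeneration (transpose) step. -/
lemma level_Tneg [NeZero ℓ] (hℓ : 2 ≤ ℓ) (hst : JStandard ℓ J θ)
    (ha : ∑ i : ZMod ℓ, θ i ≠ 0) (hμ : IsJCore ℓ J μ) {n : ℤ} (hn : n ≤ -1)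
    (C : Submodule ℂ (V μ))
    (hYC : ∀ f ∈ C, YT ℓ θ μ f ∈ C)
    (hprev : ∀ b : ↥μ.cells, rsd (b : ℕ × ℕ) = n + 1 → sgl μ (b : ℕ × ℕ) ∈ C) :
    ∀ t ∈ lvl μ n, sgl μ (t : ℕ × ℕ) ∈ C := by
  classical
  have hmemμ : ∀ t : ↥μ.cells, (t : ℕ × ℕ) ∈ μ := fun t => (YoungDiagram.mem_cells _).mp t.2
  have harm0 : ∀ t : ↥μ.cells, 0 ≤ arm μ (hk (t : ℕ × ℕ)) :=
    fun t => arm_nonneg (hk_mem (hmemμ t))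
  have hlegb : ∀ t ∈ lvl μ n, -(leg μ (hk (t : ℕ × ℕ))) ≤ n := by
    intro t ht
    have := neg_leg_le_rsd (hmemμ t)
    rw [mem_lvl.mp ht] at this
    exact this
  have hbmem : ∀ t ∈ lvl μ n, hcell (hk (t : ℕ × ℕ)) (n+1) ∈ μ.cells := by
    intro t ht
    rw [mem_cells_iff_hcell t.2]
    have := harm0 t
    have := hlegb t ht
    omega
  have hGform : ∀ t ∈ lvl μ n,
      YT ℓ θ μ (sgl μ (hcell (hk (t : ℕ × ℕ)) (n+1)))
        = Ssum ℓ θ (-(leg μ (hk (t : ℕ × ℕ)))) n • sgl μ (t : ℕ × ℕ)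
          + ∑ s ∈ (lvl μ n).filter (fun s : ↥μ.cells => hk (s : ℕ × ℕ) < hk (t : ℕ × ℕ)),
              beta ℓ θ μ (hk (t : ℕ × ℕ)) • sgl μ (s : ℕ × ℕ) := by
    intro t ht
    have h1 := YT_sgl_neg (θ := θ) (hbmem t ht) hn (by rw [rsd_hcell])
    rw [hk_hcell, hcell_of_lvl ht] at h1
    exact h1
  have hGmem : ∀ t ∈ lvl μ n,
      YT ℓ θ μ (sgl μ (hcell (hk (t : ℕ × ℕ)) (n+1))) ∈ C := by
    intro t ht
    exact hYC _ (hprev ⟨_, hbmem t ht⟩ (by exact rsd_hcell _ _))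
  by_cases hall : ∀ t ∈ lvl μ n, Ssum ℓ θ (-(leg μ (hk (t : ℕ × ℕ)))) n ≠ 0
  · apply chain_asc C (lvl μ n)
      (fun t => Ssum ℓ θ (-(leg μ (hk (t : ℕ × ℕ)))) n)
      (fun t _ => beta ℓ θ μ (hk (t : ℕ × ℕ)))
    · exact hall
    · intro t ht
      have := hGmem t ht
      rwa [hGform t ht] at this
  · push_neg at hall
    obtain ⟨t₀, ht₀, hS₀⟩ := hall
    obtain ⟨H, hH, hlegH⟩ := leg_walk hμ (hk_mem (hmemμ t₀)) (j := n) hn (hlegb t₀ ht₀)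
      (fun x hx1 hx2 => vanishing_interval hℓ hst ha
        (p := -(leg μ (hk (t₀ : ℕ × ℕ)))) (q := n) (hlegb t₀ ht₀) hS₀ x hx1 hx2)
    have haH : hcell H (n+1) ∈ μ.cells := by
      rw [YoungDiagram.mem_cells]
      rw [hcell_mem_iff hH]
      have := arm_nonneg hH
      omega
    have hWmem : YT ℓ θ μ (sgl μ (hcell H (n+1))) ∈ C :=
      hYC _ (hprev ⟨_, haH⟩ (by exact rsd_hcell _ _))
    have hWform : YT ℓ θ μ (sgl μ (hcell H (n+1)))
        = ∑ s ∈ lvl μ n, beta ℓ θ μ H • sgl μ (s : ℕ × ℕ) := by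
      have h1 := YT_sgl_neg (θ := θ) haH hn (by rw [rsd_hcell])
      rw [hk_hcell] at h1
      rw [h1, show -(leg μ H) = n + 1 from by omega, Ssum_empty (by omega), zero_smul, zero_add]
      congr 1
      apply Finset.filter_true_of_mem
      intro s hs
      by_contra hge
      push_neg at hge
      have := leg_anti (μ := μ) hge
      have := hlegb s hs
      omega
    have hT : ∀ t ∈ lvl μ n, Ssum ℓ θ (n+1) (arm μ (hk (t : ℕ × ℕ))) ≠ 0 := by
      intro t ht hT0
      exact pair_rule hℓ hst ha hμ (hk_mem (hmemμ t)) (hk_mem (hmemμ t₀)) (m := n)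
        (hlegb t₀ ht₀) (by have := harm0 t; omega) hS₀ hT0
    have hbne := beta_ne_zero hℓ hst ha hμ hH
    apply chain_desc C (lvl μ n)
      (fun t => -(Ssum ℓ θ (n+1) (arm μ (hk (t : ℕ × ℕ)))))
      (fun t _ => -(beta ℓ θ μ (hk (t : ℕ × ℕ))))
    · intro t ht
      exact neg_ne_zero.mpr (hT t ht)
    · intro t ht
      have hmem : (YT ℓ θ μ (sgl μ (hcell (hk (t : ℕ × ℕ)) (n+1)))
          - (beta ℓ θ μ (hk (t : ℕ × ℕ)) * (beta ℓ θ μ H)⁻¹) • YT ℓ θ μ (sgl μ (hcell H (n+1)))) ∈ C :=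
        Submodule.sub_mem _ (hGmem t ht) (Submodule.smul_mem _ _ hWmem)
      have hscal : ∀ s : ↥μ.cells,
          (beta ℓ θ μ (hk (t : ℕ × ℕ)) * (beta ℓ θ μ H)⁻¹) • (beta ℓ θ μ H • sgl μ (s : ℕ × ℕ))
            = beta ℓ θ μ (hk (t : ℕ × ℕ)) • sgl μ (s : ℕ × ℕ) := by
        intro s
        rw [smul_smul, mul_assoc, inv_mul_cancel₀ hbne, mul_one]
      have heq : (YT ℓ θ μ (sgl μ (hcell (hk (t : ℕ × ℕ)) (n+1)))
          - (beta ℓ θ μ (hk (t : ℕ × ℕ)) * (beta ℓ θ μ H)⁻¹) • YT ℓ θ μ (sgl μ (hcell H (n+1))))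
          = (-(Ssum ℓ θ (n+1) (arm μ (hk (t : ℕ × ℕ))))) • sgl μ (t : ℕ × ℕ)
            + ∑ s ∈ (lvl μ n).filter (fun s : ↥μ.cells => hk (t : ℕ × ℕ) < hk (s : ℕ × ℕ)),
                (-(beta ℓ θ μ (hk (t : ℕ × ℕ)))) • sgl μ (s : ℕ × ℕ) := by
        rw [hGform t ht, hWform, Finset.smul_sum]
        rw [Finset.sum_congr rfl (fun s _ => hscal s)]
        rw [lvl_sum_split ht (fun s => beta ℓ θ μ (hk (t : ℕ × ℕ)) • sgl μ (s : ℕ × ℕ))]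
        have h1 : beta ℓ θ μ (hk (t : ℕ × ℕ)) • sgl μ (t : ℕ × ℕ)
            = Ssum ℓ θ (-(leg μ (hk (t : ℕ × ℕ)))) n • sgl μ (t : ℕ × ℕ)
              + Ssum ℓ θ (n+1) (arm μ (hk (t : ℕ × ℕ))) • sgl μ (t : ℕ × ℕ) := by
          rw [← add_smul, ← beta_split (hk (t : ℕ × ℕ)) (m := n)
            (by have := hlegb t ht; omega) (by have := harm0 t; omega)]
        have h2 : ∑ s ∈ (lvl μ n).filter (fun s : ↥μ.cells => hk (t : ℕ × ℕ) < hk (s : ℕ × ℕ)),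
            (-(beta ℓ θ μ (hk (t : ℕ × ℕ)))) • sgl μ (s : ℕ × ℕ)
            = -∑ s ∈ (lvl μ n).filter (fun s : ↥μ.cells => hk (t : ℕ × ℕ) < hk (s : ℕ × ℕ)),
                beta ℓ θ μ (hk (t : ℕ × ℕ)) • sgl μ (s : ℕ × ℕ) := by
          rw [← Finset.sum_neg_distrib]
          exact Finset.sum_congr rfl fun s _ => neg_smul _ _
        rw [h1, h2, neg_smul]
        abel
      rw [← heq]
      exact hmem

/-- Positive-side cogeneration (transpose) step. -/
lemma level_Tpos [NeZero ℓ] (hℓ : 2 ≤ ℓ) (hst : JStandard ℓ J θ)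
    (ha : ∑ i : ZMod ℓ, θ i ≠ 0) (hμ : IsJCore ℓ J μ) {n : ℤ} (hn : 0 ≤ n)
    (C : Submodule ℂ (V μ))
    (hYC : ∀ f ∈ C, YT ℓ θ μ f ∈ C)
    (hwt : wt μ n ∈ C)
    (hprev : ∀ b : ↥μ.cells, rsd (b : ℕ × ℕ) = n + 1 → sgl μ (b : ℕ × ℕ) ∈ C) :
    ∀ t ∈ lvl μ n, sgl μ (t : ℕ × ℕ) ∈ C := by
  classical
  have hmemμ : ∀ t : ↥μ.cells, (t : ℕ × ℕ) ∈ μ := fun t => (YoungDiagram.mem_cells _).mp t.2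
  have hleg0 : ∀ t : ↥μ.cells, 0 ≤ leg μ (hk (t : ℕ × ℕ)) :=
    fun t => leg_nonneg (hk_mem (hmemμ t))
  have harmb : ∀ t ∈ lvl μ n, n ≤ arm μ (hk (t : ℕ × ℕ)) := by
    intro t ht
    have := rsd_le_arm (hmemμ t)
    rw [mem_lvl.mp ht] at this
    exact this
  have holdiff : ∀ t ∈ lvl μ n,
      (hcell (hk (t : ℕ × ℕ)) (n+1) ∈ μ.cells ↔ n + 1 ≤ arm μ (hk (t : ℕ × ℕ))) := by
    intro t ht
    rw [mem_cells_iff_hcell t.2]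
    have := hleg0 t
    omega
  have hGform : ∀ t ∈ lvl μ n, ∀ hb : hcell (hk (t : ℕ × ℕ)) (n+1) ∈ μ.cells,
      YT ℓ θ μ (sgl μ (hcell (hk (t : ℕ × ℕ)) (n+1)))
        = (-(Ssum ℓ θ (n+1) (arm μ (hk (t : ℕ × ℕ))))) • sgl μ (t : ℕ × ℕ)
          + ∑ s ∈ (lvl μ n).filter (fun s : ↥μ.cells => hk (t : ℕ × ℕ) < hk (s : ℕ × ℕ)),
              (-(beta ℓ θ μ (hk (t : ℕ × ℕ)))) • sgl μ (s : ℕ × ℕ) := by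
    intro t ht hb
    have h1 := YT_sgl_pos (θ := θ) hb hn (by rw [rsd_hcell])
    rw [hk_hcell, hcell_of_lvl ht] at h1
    exact h1
  have hGmem : ∀ t ∈ lvl μ n, ∀ hb : hcell (hk (t : ℕ × ℕ)) (n+1) ∈ μ.cells,
      YT ℓ θ μ (sgl μ (hcell (hk (t : ℕ × ℕ)) (n+1))) ∈ C := by
    intro t ht hb
    exact hYC _ (hprev ⟨_, hb⟩ (by exact rsd_hcell _ _))
  have hwtsum : wt μ n = ∑ s ∈ lvl μ n, (1 : ℂ) • sgl μ (s : ℕ × ℕ) := wt_eq_sum n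
  by_cases hall : ∀ t ∈ lvl μ n, hcell (hk (t : ℕ × ℕ)) (n+1) ∈ μ.cells →
      Ssum ℓ θ (-(leg μ (hk (t : ℕ × ℕ)))) n ≠ 0
  · -- ascending chain
    apply chain_asc C (lvl μ n)
      (fun t => if hcell (hk (t : ℕ × ℕ)) (n+1) ∈ μ.cells
        then Ssum ℓ θ (-(leg μ (hk (t : ℕ × ℕ)))) n else 1)
      (fun t _ => if hcell (hk (t : ℕ × ℕ)) (n+1) ∈ μ.cells
        then beta ℓ θ μ (hk (t : ℕ × ℕ)) else 1)
    · intro t ht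
      by_cases hb : hcell (hk (t : ℕ × ℕ)) (n+1) ∈ μ.cells
      · rw [if_pos hb]; exact hall t ht hb
      · rw [if_neg hb]; exact one_ne_zero
    · intro t ht
      by_cases hb : hcell (hk (t : ℕ × ℕ)) (n+1) ∈ μ.cells
      · simp only [if_pos hb]
        have hmem : (beta ℓ θ μ (hk (t : ℕ × ℕ)) • wt μ n
            + YT ℓ θ μ (sgl μ (hcell (hk (t : ℕ × ℕ)) (n+1)))) ∈ C :=
          Submodule.add_mem _ (Submodule.smul_mem _ _ hwt) (hGmem t ht hb)
        have heq : (beta ℓ θ μ (hk (t : ℕ × ℕ)) • wt μ n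
            + YT ℓ θ μ (sgl μ (hcell (hk (t : ℕ × ℕ)) (n+1))))
            = Ssum ℓ θ (-(leg μ (hk (t : ℕ × ℕ)))) n • sgl μ (t : ℕ × ℕ)
              + ∑ s ∈ (lvl μ n).filter (fun s : ↥μ.cells => hk (s : ℕ × ℕ) < hk (t : ℕ × ℕ)),
                  beta ℓ θ μ (hk (t : ℕ × ℕ)) • sgl μ (s : ℕ × ℕ) := by
          rw [hGform t ht hb, hwtsum, Finset.smul_sum]
          rw [Finset.sum_congr rfl (fun s _ => by rw [smul_smul, mul_one])]
          rw [lvl_sum_split ht (fun s => beta ℓ θ μ (hk (t : ℕ × ℕ)) • sgl μ (s : ℕ × ℕ))]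
          have h1 : beta ℓ θ μ (hk (t : ℕ × ℕ)) • sgl μ (t : ℕ × ℕ)
              = Ssum ℓ θ (-(leg μ (hk (t : ℕ × ℕ)))) n • sgl μ (t : ℕ × ℕ)
                + Ssum ℓ θ (n+1) (arm μ (hk (t : ℕ × ℕ))) • sgl μ (t : ℕ × ℕ) := by
            rw [← add_smul, ← beta_split (hk (t : ℕ × ℕ)) (m := n)
              (by have := hleg0 t; omega) (by rw [holdiff t ht] at hb; omega)]
          have h2 : ∑ s ∈ (lvl μ n).filter (fun s : ↥μ.cells => hk (t : ℕ × ℕ) < hk (s : ℕ × ℕ)),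
              (-(beta ℓ θ μ (hk (t : ℕ × ℕ)))) • sgl μ (s : ℕ × ℕ)
              = -∑ s ∈ (lvl μ n).filter (fun s : ↥μ.cells => hk (t : ℕ × ℕ) < hk (s : ℕ × ℕ)),
                  beta ℓ θ μ (hk (t : ℕ × ℕ)) • sgl μ (s : ℕ × ℕ) := by
            rw [← Finset.sum_neg_distrib]
            exact Finset.sum_congr rfl fun s _ => neg_smul _ _
          rw [h1, h2, neg_smul]
          abel
        rw [← heq]
        exact hmem
      · simp only [if_neg hb]
        have harmt : arm μ (hk (t : ℕ × ℕ)) = n := by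
          rw [holdiff t ht] at hb
          have := harmb t ht
          omega
        have heq : wt μ n
            = (1 : ℂ) • sgl μ (t : ℕ × ℕ)
              + ∑ s ∈ (lvl μ n).filter (fun s : ↥μ.cells => hk (s : ℕ × ℕ) < hk (t : ℕ × ℕ)),
                  (1 : ℂ) • sgl μ (s : ℕ × ℕ) := by
          rw [hwtsum, lvl_sum_split ht (fun s => (1 : ℂ) • sgl μ (s : ℕ × ℕ))]
          have hgt : (lvl μ n).filter
              (fun s : ↥μ.cells => hk (t : ℕ × ℕ) < hk (s : ℕ × ℕ)) = ∅ := by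
            rw [Finset.filter_eq_empty_iff]
            intro s hs hlt
            have := arm_strict_anti (μ := μ) hlt
            have := harmb s hs
            omega
          rw [hgt, Finset.sum_empty, add_zero]
        rw [← heq]
        exact hwt
  · push_neg at hall
    obtain ⟨t₀, ht₀, hb₀, hS₀⟩ := hall
    have hb₀' : n + 1 ≤ arm μ (hk (t₀ : ℕ × ℕ)) := (holdiff t₀ ht₀).mp hb₀
    -- every box at this level has a box above it
    have hold : ∀ t ∈ lvl μ n, hcell (hk (t : ℕ × ℕ)) (n+1) ∈ μ.cells := by
      intro t ht
      by_contra hb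
      have harmt : arm μ (hk (t : ℕ × ℕ)) = n := by
        rw [holdiff t ht] at hb
        have := harmb t ht
        omega
      have hkle : hk (t₀ : ℕ × ℕ) ≤ hk (t : ℕ × ℕ) := by
        by_contra hlt
        push_neg at hlt
        have := arm_anti (μ := μ) (le_of_lt hlt)
        omega
      have hlegle := leg_anti (μ := μ) hkle
      apply hook_subJ_false hμ (hk_mem (hmemμ t))
      intro x hx1 hx2
      apply vanishing_interval hℓ hst ha (p := -(leg μ (hk (t₀ : ℕ × ℕ)))) (q := n)
        (by have := hleg0 t₀; omega) hS₀ x (by omega) (by omega)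
    have hT : ∀ t ∈ lvl μ n, Ssum ℓ θ (n+1) (arm μ (hk (t : ℕ × ℕ))) ≠ 0 := by
      intro t ht hT0
      exact pair_rule hℓ hst ha hμ (hk_mem (hmemμ t)) (hk_mem (hmemμ t₀)) (m := n)
        (by have := hleg0 t₀; omega) ((holdiff t ht).mp (hold t ht)) hS₀ hT0
    apply chain_desc C (lvl μ n)
      (fun t => -(Ssum ℓ θ (n+1) (arm μ (hk (t : ℕ × ℕ)))))
      (fun t _ => -(beta ℓ θ μ (hk (t : ℕ × ℕ))))
    · intro t ht
      exact neg_ne_zero.mpr (hT t ht)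
    · intro t ht
      have := hGmem t ht (hold t ht)
      rwa [hGform t ht (hold t ht)] at this


end

section


open Finset

variable {ℓ : ℕ} {J : Set (ZMod ℓ)} {θ : ZMod ℓ → ℂ} {μ : YoungDiagram}

/-- Generation: an `X`,`Y`-stable subspace containing `x(1)` is everything. -/
lemma gen [NeZero ℓ] (hℓ : 2 ≤ ℓ) (hst : JStandard ℓ J θ)
    (ha : ∑ i : ZMod ℓ, θ i ≠ 0) (hμ : IsJCore ℓ J μ) (C : Submodule ℂ (V μ))
    (hXC : ∀ f ∈ C, Xmap μ f ∈ C) (hYC : ∀ f ∈ C, Ymap ℓ θ μ f ∈ C)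
    (hxC : xmap ℓ θ μ 1 ∈ C) : C = ⊤ := by
  have hwv0 : wv ℓ θ μ 0 ∈ C := by rw [wv_zero]; exact hxC
  have hwvN : ∀ m : ℕ, wv ℓ θ μ (-(m : ℤ)) ∈ C := by
    intro m
    induction m with
    | zero => simpa using hwv0
    | succ m ih =>
      have h1 := hXC _ ih
      rw [Xmap_wv (by omega)] at h1
      have h2 : (-(m : ℤ)) - 1 = -((m + 1 : ℕ) : ℤ) := by push_cast; ring
      rwa [h2] at h1
  have hwv : ∀ n : ℤ, n ≤ 0 → wv ℓ θ μ n ∈ C := by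
    intro n hn
    have := hwvN ((-n).toNat)
    rwa [show -(((-n).toNat : ℕ) : ℤ) = n by omega] at this
  have main : ∀ N : ℕ, ∀ c : ↥μ.cells,
      rsd (c : ℕ × ℕ) < -(μ.colLen 0 : ℤ) + 1 + N → sgl μ (c : ℕ × ℕ) ∈ C := by
    intro N
    induction N with
    | zero =>
      intro c hc
      exfalso
      have h1 := neg_leg_le_rsd ((YoungDiagram.mem_cells _).mp c.2)
      have h2 := leg_anti (μ := μ) (Nat.zero_le (hk (c : ℕ × ℕ)))
      have h3 : leg μ 0 = (μ.colLen 0 : ℤ) - 1 := by unfold leg; push_cast; ring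
      push_cast at hc
      omega
    | succ N ih =>
      intro c hc
      push_cast at hc
      by_cases hlt : rsd (c : ℕ × ℕ) < -(μ.colLen 0 : ℤ) + 1 + N
      · exact ih c hlt
      have hrn : rsd (c : ℕ × ℕ) = -(μ.colLen 0 : ℤ) + 1 + N := by omega
      set n : ℤ := -(μ.colLen 0 : ℤ) + 1 + N with hndef
      have hprev : ∀ b : ↥μ.cells, rsd (b : ℕ × ℕ) = n - 1 → sgl μ (b : ℕ × ℕ) ∈ C :=
        fun b hb => ih b (by omega)
      rcases le_or_gt n 0 with hn | hn
      · exact level_neg hℓ hst ha hμ hn C hYC (hwv n hn) hprev c (mem_lvl.mpr hrn)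
      · exact level_pos hℓ hst ha hμ hn C hYC hprev c (mem_lvl.mpr hrn)
  apply eq_top_of_sgl
  intro c hcmem
  apply main (μ.colLen 0 + μ.rowLen 0) ⟨c, hcmem⟩
  have h1 := rsd_le_arm ((YoungDiagram.mem_cells _).mp hcmem)
  have h2 := arm_anti (μ := μ) (Nat.zero_le (hk c))
  have h3 : arm μ 0 = (μ.rowLen 0 : ℤ) - 1 := by unfold arm; push_cast; ring
  push_cast
  omega

/-- Cogeneration: an `Xᵀ`,`Yᵀ`-stable subspace containing the `y` vector is everything. -/
lemma cog [NeZero ℓ] (hℓ : 2 ≤ ℓ) (hst : JStandard ℓ J θ)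
    (ha : ∑ i : ZMod ℓ, θ i ≠ 0) (hμ : IsJCore ℓ J μ) (C : Submodule ℂ (V μ))
    (hXC : ∀ f ∈ C, XT μ f ∈ C) (hYC : ∀ f ∈ C, YT ℓ θ μ f ∈ C)
    (hyC : wt μ 0 ∈ C) : C = ⊤ := by
  have hwtN : ∀ m : ℕ, wt μ (m : ℤ) ∈ C := by
    intro m
    induction m with
    | zero => simpa using hyC
    | succ m ih =>
      have h1 := hXC _ ih
      rw [XT_wt (by omega)] at h1
      have h2 : ((m : ℤ)) + 1 = ((m + 1 : ℕ) : ℤ) := by push_cast; ring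
      rwa [h2] at h1
  have hwt : ∀ n : ℤ, 0 ≤ n → wt μ n ∈ C := by
    intro n hn
    have := hwtN (n.toNat)
    rwa [show ((n.toNat : ℕ) : ℤ) = n by omega] at this
  have main : ∀ N : ℕ, ∀ c : ↥μ.cells,
      (μ.rowLen 0 : ℤ) - 1 - N < rsd (c : ℕ × ℕ) → sgl μ (c : ℕ × ℕ) ∈ C := by
    intro N
    induction N with
    | zero =>
      intro c hc
      exfalso
      have h1 := rsd_le_arm ((YoungDiagram.mem_cells _).mp c.2)
      have h2 := arm_anti (μ := μ) (Nat.zero_le (hk (c : ℕ × ℕ)))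
      have h3 : arm μ 0 = (μ.rowLen 0 : ℤ) - 1 := by unfold arm; push_cast; ring
      push_cast at hc
      omega
    | succ N ih =>
      intro c hc
      push_cast at hc
      by_cases hlt : (μ.rowLen 0 : ℤ) - 1 - N < rsd (c : ℕ × ℕ)
      · exact ih c hlt
      have hrn : rsd (c : ℕ × ℕ) = (μ.rowLen 0 : ℤ) - 1 - N := by omega
      set n : ℤ := (μ.rowLen 0 : ℤ) - 1 - N with hndef
      have hprev : ∀ b : ↥μ.cells, rsd (b : ℕ × ℕ) = n + 1 → sgl μ (b : ℕ × ℕ) ∈ C :=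
        fun b hb => ih b (by omega)
      rcases le_or_gt n (-1) with hn | hn
      · exact level_Tneg hℓ hst ha hμ hn C hYC hprev c (mem_lvl.mpr hrn)
      · exact level_Tpos hℓ hst ha hμ (by omega) C hYC (hwt n (by omega)) hprev c (mem_lvl.mpr hrn)
  apply eq_top_of_sgl
  intro c hcmem
  apply main (μ.rowLen 0 + μ.colLen 0) ⟨c, hcmem⟩
  have h1 := neg_leg_le_rsd ((YoungDiagram.mem_cells _).mp hcmem)
  have h2 := leg_anti (μ := μ) (Nat.zero_le (hk c))
  have h3 : leg μ 0 = (μ.colLen 0 : ℤ) - 1 := by unfold leg; push_cast; ring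
  push_cast
  omega


end

section


open Finset

variable {ℓ : ℕ} {J : Set (ZMod ℓ)} {θ : ZMod ℓ → ℂ} {μ : YoungDiagram}

/-- the standard bilinear pairing on `V μ`. -/
noncomputable def pr (μ : YoungDiagram) (f g : V μ) : ℂ := ∑ c : ↥μ.cells, f c * g c

lemma pr_add_right (f g g' : V μ) : pr μ f (g + g') = pr μ f g + pr μ f g' := by
  unfold pr
  rw [← Finset.sum_add_distrib]
  exact Finset.sum_congr rfl fun c _ => by rw [Pi.add_apply]; ring

lemma pr_smul_right (a : ℂ) (f g : V μ) : pr μ f (a • g) = a * pr μ f g := by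
  unfold pr
  rw [Finset.mul_sum]
  exact Finset.sum_congr rfl fun c _ => by rw [Pi.smul_apply]; simp; ring

lemma pr_sgl (f : V μ) (c : ↥μ.cells) : pr μ f (sgl μ (c : ℕ × ℕ)) = f c := by
  unfold pr
  rw [Finset.sum_eq_single c]
  · rw [sgl_apply, if_pos rfl, mul_one]
  · intro b _ hb
    rw [sgl_apply, if_neg (fun h => hb (Subtype.ext h)), mul_zero]
  · intro h; exact absurd (Finset.mem_univ _) h

lemma pr_sgl_left (f : V μ) (c : ↥μ.cells) : pr μ (sgl μ (c : ℕ × ℕ)) f = f c := by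
  unfold pr
  rw [Finset.sum_eq_single c]
  · rw [sgl_apply, if_pos rfl, one_mul]
  · intro b _ hb
    rw [sgl_apply, if_neg (fun h => hb (Subtype.ext h)), zero_mul]
  · intro h; exact absurd (Finset.mem_univ _) h

lemma expand_sgl (f : V μ) : f = ∑ c : ↥μ.cells, f c • sgl μ (c : ℕ × ℕ) := by
  funext x
  rw [sum_sgl_apply Finset.univ f x, if_pos (Finset.mem_univ x)]

lemma pr_matMap (K : ℕ × ℕ → ℕ × ℕ → ℂ) (f g : V μ) :
    pr μ (matMap μ K f) g = pr μ f (matMap μ (fun a b => K b a) g) := by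
  unfold pr
  have h1 : ∀ c' : ↥μ.cells, matMap μ K f c' * g c'
      = ∑ c : ↥μ.cells, K (c : ℕ × ℕ) (c' : ℕ × ℕ) * f c * g c' := by
    intro c'
    rw [matMap_apply, Finset.sum_mul]
  rw [Finset.sum_congr rfl fun c' _ => h1 c', Finset.sum_comm]
  apply Finset.sum_congr rfl
  intro c _
  rw [matMap_apply, Finset.mul_sum]
  exact Finset.sum_congr rfl fun c' _ => by ring

/-- the pairing annihilator of a submodule. -/
noncomputable def ann (U : Submodule ℂ (V μ)) : Submodule ℂ (V μ) where
  carrier := {g | ∀ u ∈ U, pr μ u g = 0}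
  add_mem' := fun {g g'} hg hg' u hu => by
    rw [pr_add_right, hg u hu, hg' u hu, add_zero]
  zero_mem' := fun u hu => by
    have : (0 : V μ) = (0 : ℂ) • (0 : V μ) := by rw [zero_smul]
    rw [this, pr_smul_right, zero_mul]
  smul_mem' := fun a {g} hg u hu => by
    rw [pr_smul_right, hg u hu, mul_zero]

lemma mem_ann {U : Submodule ℂ (V μ)} {g : V μ} : g ∈ ann U ↔ ∀ u ∈ U, pr μ u g = 0 :=
  Iff.rfl

lemma ann_stable (U : Submodule ℂ (V μ)) (K : ℕ × ℕ → ℕ × ℕ → ℂ)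
    (hU : ∀ u ∈ U, matMap μ K u ∈ U) :
    ∀ g ∈ ann U, matMap μ (fun a b => K b a) g ∈ ann U := by
  intro g hg u hu
  rw [← pr_matMap]
  exact hg _ (hU u hu)

lemma ann_eq_bot_arg {U : Submodule ℂ (V μ)} (h : ann U = ⊤) : U = ⊥ := by
  rw [eq_bot_iff]
  intro u hu
  have : ∀ c : ↥μ.cells, u c = 0 := by
    intro c
    have hmem : sgl μ (c : ℕ × ℕ) ∈ ann U := h ▸ Submodule.mem_top
    have := hmem u hu
    rwa [pr_sgl] at this
  have : u = 0 := funext this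
  rw [this]
  exact Submodule.zero_mem ⊥


end

section


open Finset

variable {ℓ' : ℕ} {J' : Set (ZMod ℓ')} {θ' : ZMod ℓ' → ℂ} {μ' : YoungDiagram}

lemma pr_comm (f g : V μ') : pr μ' f g = pr μ' g f :=
  Finset.sum_congr rfl fun c _ => mul_comm _ _

lemma mem_Vmod {i : ZMod ℓ'} {f : V μ'} :
    f ∈ Vmod ℓ' μ' i ↔ ∀ c : ↥μ'.cells, res ℓ' (c : ℕ × ℕ) ≠ i → f c = 0 := Iff.rfl


end

/-- If `θ` is `J`-standard with `∑ θ_i ≠ 0` and the partition `μ` is a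
`J`-core, then the framed `θ`-representation `A_μ` is simple: its only subrepresentations
are zero and the whole of `A_μ`. -/
theorem amu_simple_of_jcore (ℓ : ℕ) [NeZero ℓ] (hℓ : 2 ≤ ℓ) (J : Set (ZMod ℓ))
    (θ : ZMod ℓ → ℂ) (hst : JStandard ℓ J θ) (ha : ∑ i : ZMod ℓ, θ i ≠ 0)
    (μ : YoungDiagram) (hμ : IsJCore ℓ J μ)
    (U : ZMod ℓ → Submodule ℂ (V μ)) (Uinf : Submodule ℂ ℂ)
    (hle : ∀ i, U i ≤ Vmod ℓ μ i)
    (hX : ∀ i : ZMod ℓ, ∀ v ∈ U i, Xmap μ v ∈ U (i - 1))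
    (hY : ∀ i : ZMod ℓ, ∀ v ∈ U i, Ymap ℓ θ μ v ∈ U (i + 1))
    (hx : ∀ z ∈ Uinf, xmap ℓ θ μ z ∈ U 0)
    (hy : ∀ v ∈ U 0, ymap μ v ∈ Uinf) :
    ((∀ i, U i = ⊥) ∧ Uinf = ⊥) ∨ ((∀ i, U i = Vmod ℓ μ i) ∧ Uinf = ⊤) := by
  classical
  set U' : Submodule ℂ (V μ) := ⨆ i, U i with hU'def
  have hUle : ∀ i, U i ≤ U' := fun i => le_iSup U i
  have hXU' : ∀ u ∈ U', Xmap μ u ∈ U' := by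
    intro u hu
    refine Submodule.iSup_induction U (motive := fun v => Xmap μ v ∈ U') hu ?_ ?_ ?_
    · intro i v hv; exact hUle (i-1) (hX i v hv)
    · show Xmap μ (0 : V μ) ∈ U'
      rw [map_zero]; exact Submodule.zero_mem _
    · intro v w hv hw
      show Xmap μ (v + w) ∈ U'
      rw [map_add]; exact Submodule.add_mem _ hv hw
  have hYU' : ∀ u ∈ U', Ymap ℓ θ μ u ∈ U' := by
    intro u hu
    refine Submodule.iSup_induction U (motive := fun v => Ymap ℓ θ μ v ∈ U') hu ?_ ?_ ?_
    · intro i v hv; exact hUle (i+1) (hY i v hv)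
    · show Ymap ℓ θ μ (0 : V μ) ∈ U'
      rw [map_zero]; exact Submodule.zero_mem _
    · intro v w hv hw
      show Ymap ℓ θ μ (v + w) ∈ U'
      rw [map_add]; exact Submodule.add_mem _ hv hw
  by_cases hUinf : Uinf = ⊥
  · left
    refine ⟨?_, hUinf⟩
    -- the `y` covector annihilates U'
    have hyU : ∀ u ∈ U', pr μ u (wt μ 0) = 0 := by
      have hpr : ∀ u : V μ, pr μ u (wt μ 0)
          = ∑ c : ↥μ.cells, (if rsd (c : ℕ × ℕ) = 0 then u c else 0) := by
        intro u
        unfold pr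
        refine Finset.sum_congr rfl fun c _ => ?_
        rw [wt_apply]
        by_cases h : rsd (c : ℕ × ℕ) = 0 <;> simp [h]
      intro u hu
      refine Submodule.iSup_induction U (motive := fun u => pr μ u (wt μ 0) = 0) hu ?_ ?_ ?_
      · intro i v hv
        by_cases hi : i = 0
        · subst hi
          have h1 := hy v hv
          rw [hUinf, Submodule.mem_bot] at h1
          rw [hpr]
          have h2 : ymap μ v = ∑ c : ↥μ.cells, (if rsd (c : ℕ × ℕ) = 0 then v c else 0) := rfl
          rw [← h2, h1]
        · rw [hpr]
          apply Finset.sum_eq_zero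
          intro c _
          by_cases h : rsd (c : ℕ × ℕ) = 0
          · rw [if_pos h]
            apply (mem_Vmod.mp (hle i hv)) c
            rw [res, h]
            push_cast
            exact fun hh => hi hh.symm
          · rw [if_neg h]
      · show pr μ (0 : V μ) (wt μ 0) = 0
        rw [hpr]; exact Finset.sum_eq_zero fun c _ => by
          by_cases h : rsd (c : ℕ × ℕ) = 0 <;> simp [h]
      · intro v w hv hw
        show pr μ (v + w) (wt μ 0) = 0
        have hh : pr μ (v + w) (wt μ 0) = pr μ v (wt μ 0) + pr μ w (wt μ 0) := by
          rw [pr_comm, pr_add_right, pr_comm (wt μ 0) v, pr_comm (wt μ 0) w]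
        rw [hh, hv, hw, add_zero]
    have hwtA : wt μ 0 ∈ ann U' := hyU
    have hXA : ∀ g ∈ ann U', XT μ g ∈ ann U' := ann_stable U' cX hXU'
    have hYA : ∀ g ∈ ann U', YT ℓ θ μ g ∈ ann U' := ann_stable U' (cY ℓ θ μ) hYU'
    have hA : ann U' = ⊤ := cog hℓ hst ha hμ (ann U') hXA hYA hwtA
    have hU'bot : U' = ⊥ := ann_eq_bot_arg hA
    intro i
    rw [eq_bot_iff]
    exact le_trans (hUle i) (le_of_eq hU'bot)
  · right
    -- Uinf = ⊤
    have hUinfTop : Uinf = ⊤ := by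
      obtain ⟨z, hz, hz0⟩ : ∃ z ∈ Uinf, z ≠ 0 := by
        by_contra h
        push_neg at h
        exact hUinf ((Submodule.eq_bot_iff _).mpr h)
      rw [eq_top_iff]
      intro w _
      have hw : w = (w * z⁻¹) • z := by
        rw [smul_eq_mul, mul_assoc, inv_mul_cancel₀ hz0, mul_one]
      rw [hw]
      exact Submodule.smul_mem _ _ hz
    refine ⟨?_, hUinfTop⟩
    have hx1 : xmap ℓ θ μ 1 ∈ U 0 := hx 1 (by rw [hUinfTop]; exact Submodule.mem_top)
    have hXB : ∀ g ∈ ann U', XT μ g ∈ ann U' := ann_stable U' cX hXU'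
    have hYB : ∀ g ∈ ann U', YT ℓ θ μ g ∈ ann U' := ann_stable U' (cY ℓ θ μ) hYU'
    have hXC : ∀ f ∈ ann (ann U'), Xmap μ f ∈ ann (ann U') :=
      ann_stable (ann U') (fun c c' => cX c' c) hXB
    have hYC : ∀ f ∈ ann (ann U'), Ymap ℓ θ μ f ∈ ann (ann U') :=
      ann_stable (ann U') (fun c c' => cY ℓ θ μ c' c) hYB
    have hxC : xmap ℓ θ μ 1 ∈ ann (ann U') := by
      intro g hg
      rw [pr_comm]
      exact hg _ (hUle 0 hx1)
    have hCtop : ann (ann U') = ⊤ := gen hℓ hst ha hμ _ hXC hYC hxC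
    have hBbot : ann U' = ⊥ := ann_eq_bot_arg hCtop
    have hU'top : U' = ⊤ := by
      by_contra hne
      obtain ⟨x0, hx0⟩ : ∃ x0 : V μ, x0 ∉ U' := by
        by_contra h
        push_neg at h
        exact hne (Submodule.eq_top_iff'.mpr h)
      have hq : U'.mkQ x0 ≠ 0 := by
        rw [Submodule.mkQ_apply, ne_eq, Submodule.Quotient.mk_eq_zero]
        exact hx0
      obtain ⟨φ, hφ⟩ : ∃ φ : Module.Dual ℂ (V μ ⧸ U'), φ (U'.mkQ x0) ≠ 0 := by
        by_contra h
        push_neg at h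
        exact hq ((Module.forall_dual_apply_eq_zero_iff ℂ _).mp h)
      set ψ : Module.Dual ℂ (V μ) := φ.comp U'.mkQ with hψdef
      set g : V μ := fun c => ψ (sgl μ (c : ℕ × ℕ)) with hgdef
      have hgpr : ∀ f : V μ, pr μ f g = ψ f := by
        intro f
        conv_rhs => rw [expand_sgl f]
        rw [map_sum]
        unfold pr
        refine Finset.sum_congr rfl fun c _ => ?_
        rw [map_smul, smul_eq_mul]
      have hgB : g ∈ ann U' := by
        intro u hu
        rw [hgpr u]
        show φ (U'.mkQ u) = 0
        rw [Submodule.mkQ_apply, (Submodule.Quotient.mk_eq_zero _).mpr hu, map_zero]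
      rw [hBbot, Submodule.mem_bot] at hgB
      apply hφ
      show ψ x0 = 0
      rw [← hgpr x0, hgB]
      unfold pr
      exact Finset.sum_eq_zero fun c _ => by rw [Pi.zero_apply, mul_zero]
    intro i
    refine le_antisymm (hle i) ?_
    intro v hv
    have hproj : ∀ u ∈ U',
        (fun c : ↥μ.cells => if res ℓ (c : ℕ × ℕ) = i then u c else 0) ∈ U i := by
      intro u hu
      refine Submodule.iSup_induction U
        (motive := fun u => (fun c : ↥μ.cells => if res ℓ (c : ℕ × ℕ) = i then u c else 0) ∈ U i)
        hu ?_ ?_ ?_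
      · intro j w hw
        by_cases hij : j = i
        · subst hij
          have heq : (fun c : ↥μ.cells => if res ℓ (c : ℕ × ℕ) = j then w c else 0) = w := by
            funext c
            by_cases h : res ℓ (c : ℕ × ℕ) = j
            · rw [if_pos h]
            · rw [if_neg h]
              exact ((mem_Vmod.mp (hle j hw)) c h).symm
          rw [heq]
          exact hw
        · have heq : (fun c : ↥μ.cells => if res ℓ (c : ℕ × ℕ) = i then w c else 0)
              = (0 : V μ) := by
            funext c
            by_cases h : res ℓ (c : ℕ × ℕ) = i
            · rw [if_pos h]
              exact (mem_Vmod.mp (hle j hw)) c (by rw [h]; exact fun hh => hij hh.symm)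
            · rw [if_neg h]; rfl
          rw [heq]
          exact Submodule.zero_mem _
      · show (fun c : ↥μ.cells => if res ℓ (c : ℕ × ℕ) = i then (0 : V μ) c else 0) ∈ U i
        have heq : (fun c : ↥μ.cells => if res ℓ (c : ℕ × ℕ) = i then (0 : V μ) c else 0)
            = (0 : V μ) := by
          funext c
          by_cases h : res ℓ (c : ℕ × ℕ) = i <;> simp [h]
        rw [heq]
        exact Submodule.zero_mem _
      · intro v1 v2 h1 h2
        show (fun c : ↥μ.cells => if res ℓ (c : ℕ × ℕ) = i then (v1 + v2) c else 0) ∈ U i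
        have heq : (fun c : ↥μ.cells => if res ℓ (c : ℕ × ℕ) = i then (v1 + v2) c else 0)
            = (fun c : ↥μ.cells => if res ℓ (c : ℕ × ℕ) = i then v1 c else 0)
              + (fun c : ↥μ.cells => if res ℓ (c : ℕ × ℕ) = i then v2 c else 0) := by
          funext c
          by_cases h : res ℓ (c : ℕ × ℕ) = i <;> simp [h]
        rw [heq]
        exact Submodule.add_mem _ h1 h2
    have hvU' : v ∈ U' := by rw [hU'top]; exact Submodule.mem_top
    have hres := hproj v hvU'
    have hveq : (fun c : ↥μ.cells => if res ℓ (c : ℕ × ℕ) = i then v c else 0) = v := by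
      funext c
      by_cases h : res ℓ (c : ℕ × ℕ) = i
      · rw [if_pos h]
      · rw [if_neg h]
        exact ((mem_Vmod.mp hv) c h).symm
    rwa [hveq] at hres


end CM
end

section
/- Let ℓ ≥ 1 and θ ∈ ℂ^(ℤ/ℓℤ) with Σ_{i ∈ ℤ/ℓℤ} θ_i ≠ 0, and let (X, Y, x, y) be a simple framed θ-representation with dimension vector d ∈ ℕ^(ℤ/ℓℤ). Then any two ℤ-gradings of (X, Y, x, y) coincide: if (V_j)_{j∈ℤ} and (V′_j)_{j∈ℤ} are two ℤ-gradings, then V_j = V′_j for all j ∈ ℤ. -/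
namespace CM

/-- Transport along an equality of vertices. -/
def castMap {ℓ : ℕ} (d : ZMod ℓ → ℕ) {i j : ZMod ℓ} (h : i = j) :
    (Fin (d i) → ℂ) →ₗ[ℂ] (Fin (d j) → ℂ) :=
  LinearMap.funLeft ℂ ℂ (Fin.cast (congrArg d h.symm))

/-- A framed `θ`-representation of the cyclic quiver with dimension vector `d`
(dimension `1` at the framing vertex `∞`).  The moment map relation at the vertex
`i + 1` reads `X_{i+1} ∘ Y_{i+1} - Y_i ∘ X_i + δ_{i+1,0} · x ∘ y = θ_{i+1} · id`. -/
structure FRep (ℓ : ℕ) (θ : ZMod ℓ → ℂ) (d : ZMod ℓ → ℕ) where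
  X : ∀ i : ZMod ℓ, (Fin (d (i + 1)) → ℂ) →ₗ[ℂ] (Fin (d i) → ℂ)
  Y : ∀ i : ZMod ℓ, (Fin (d i) → ℂ) →ₗ[ℂ] (Fin (d (i + 1)) → ℂ)
  x : ℂ →ₗ[ℂ] (Fin (d 0) → ℂ)
  y : (Fin (d 0) → ℂ) →ₗ[ℂ] ℂ
  rel : ∀ i : ZMod ℓ,
    X (i + 1) ∘ₗ Y (i + 1) - Y i ∘ₗ X i +
      (if h : i + 1 = (0 : ZMod ℓ) then castMap d h.symm ∘ₗ x ∘ₗ y ∘ₗ castMap d h else 0) =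
    θ (i + 1) • LinearMap.id

/-- A subrepresentation of a framed representation. -/
structure FSubrep {ℓ : ℕ} {θ : ZMod ℓ → ℂ} {d : ZMod ℓ → ℕ} (R : FRep ℓ θ d) where
  U : ∀ i : ZMod ℓ, Submodule ℂ (Fin (d i) → ℂ)
  Uinf : Submodule ℂ ℂ
  hX : ∀ i : ZMod ℓ, ∀ v ∈ U (i + 1), R.X i v ∈ U i
  hY : ∀ i : ZMod ℓ, ∀ v ∈ U i, R.Y i v ∈ U (i + 1)
  hx : ∀ z ∈ Uinf, R.x z ∈ U 0
  hy : ∀ v ∈ U 0, R.y v ∈ Uinf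

/-- A framed representation is simple if its only subrepresentations are zero and itself. -/
def FSimple {ℓ : ℕ} {θ : ZMod ℓ → ℂ} {d : ZMod ℓ → ℕ} (R : FRep ℓ θ d) : Prop :=
  ∀ S : FSubrep R,
    ((∀ i, S.U i = ⊥) ∧ S.Uinf = ⊥) ∨ ((∀ i, S.U i = ⊤) ∧ S.Uinf = ⊤)

/-- `E_θ`: the set of dimension vectors of simple framed `θ`-representations. -/
def Eset (ℓ : ℕ) (θ : ZMod ℓ → ℂ) : Set (ZMod ℓ → ℕ) :=
  {d | ∃ R : FRep ℓ θ d, FSimple R}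

/-- A `ℤ`-grading of a framed representation `(X, Y, x, y)`: subspaces
`V_j ⊆ ℂ^{d_{j mod ℓ}}` such that each vertex space is the internal direct sum of the
`V_j` with `j ≡ i mod ℓ`, `X` and `Y` lower/raise degree by one, the image of `x` lies
in `V_0`, and `y` vanishes on each `V_j`, `j ≠ 0`. -/
def IsZGrading {ℓ : ℕ} {θ : ZMod ℓ → ℂ} {d : ZMod ℓ → ℕ} (R : FRep ℓ θ d)
    (Vg : ∀ j : ℤ, Submodule ℂ (Fin (d ((j : ZMod ℓ))) → ℂ)) : Prop :=
  (∀ i : ZMod ℓ, DirectSum.IsInternal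
      (fun j : {j : ℤ // ((j : ℤ) : ZMod ℓ) = i} => (Vg j.1).map (castMap d j.2))) ∧
  (∀ j : ℤ, ∀ v ∈ Vg (j + 1),
    R.X (j : ZMod ℓ)
      (castMap d (by push_cast; ring : ((j + 1 : ℤ) : ZMod ℓ) = (j : ZMod ℓ) + 1) v)
      ∈ Vg j) ∧
  (∀ j : ℤ, ∀ v ∈ Vg j,
    castMap d (by push_cast; ring : ((j : ZMod ℓ) + 1) = ((j + 1 : ℤ) : ZMod ℓ))
      (R.Y (j : ZMod ℓ) v) ∈ Vg (j + 1)) ∧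
  (∀ z : ℂ,
    castMap d (by push_cast; ring : (0 : ZMod ℓ) = ((0 : ℤ) : ZMod ℓ)) (R.x z) ∈ Vg 0) ∧
  (∀ j : ℤ, j ≠ 0 → ∀ h : ((j : ℤ) : ZMod ℓ) = 0, ∀ v ∈ Vg j, R.y (castMap d h v) = 0)

/-- If a family `f` is independent, `W k ≤ f k` for all `k`, and the `W k` span everything,
then `f j ≤ W j` for every `j`. -/
lemma part_le_of_iSup_top {M : Type*} [AddCommGroup M] [Module ℂ M] {ι : Type*}
    [DecidableEq ι] (f W : ι → Submodule ℂ M) (hind : iSupIndep f)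
    (hle : ∀ k, W k ≤ f k) (htop : ⨆ k, W k = ⊤) (j : ι) : f j ≤ W j := by
  intro v hv
  have hv2 : v ∈ W j ⊔ ⨆ k, ⨆ _ : k ≠ j, f k := by
    have hmem : v ∈ ⨆ k, W k := htop ▸ Submodule.mem_top
    refine (iSup_le fun k => ?_ : (⨆ k, W k) ≤ _) hmem
    by_cases hk : k = j
    · subst hk; exact le_sup_left
    · exact le_trans (le_trans (hle k) (le_iSup₂ (f := fun k _ => f k) k hk)) le_sup_right
  obtain ⟨w, hw, z, hz, hvwz⟩ := Submodule.mem_sup.mp hv2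
  have hzf : z ∈ f j := by
    have : (w + z) - w ∈ f j := Submodule.sub_mem _ (hvwz ▸ hv) (hle j hw)
    simpa using this
  have hz0 : z = 0 := Submodule.disjoint_def.mp (hind j) z hzf hz
  rw [← hvwz, hz0, add_zero]
  exact hw

/-- If `∑ θ_i ≠ 0`, a simple framed `θ`-representation admits at most
one `ℤ`-grading. -/
theorem zgrading_unique (ℓ : ℕ) [NeZero ℓ] (θ : ZMod ℓ → ℂ)
    (ha : ∑ i : ZMod ℓ, θ i ≠ 0) (d : ZMod ℓ → ℕ) (R : FRep ℓ θ d) (hR : FSimple R)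
    (Vg Vg' : ∀ j : ℤ, Submodule ℂ (Fin (d ((j : ZMod ℓ))) → ℂ))
    (h : IsZGrading R Vg) (h' : IsZGrading R Vg') : Vg = Vg' := by
  classical
  -- The subrepresentation spanned by the intersections `Vg j ⊓ Vg' j`.
  set S : FSubrep R :=
    { U := fun i => ⨆ k : {k : ℤ // ((k : ℤ) : ZMod ℓ) = i},
        ((Vg k.1 ⊓ Vg' k.1).map (castMap d k.2))
      Uinf := ⊤
      hX := by
        intro i v hv
        refine Submodule.iSup_induction
          (motive := fun w => R.X i w ∈ ⨆ k : {k : ℤ // ((k : ℤ) : ZMod ℓ) = i},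
            ((Vg k.1 ⊓ Vg' k.1).map (castMap d k.2))) _ hv ?_ ?_ ?_
        · rintro ⟨k, hk⟩ v hv
          obtain ⟨j, rfl⟩ : ∃ j : ℤ, k = j + 1 := ⟨k - 1, by ring⟩
          have hji : ((j : ℤ) : ZMod ℓ) = i := by
            push_cast at hk
            exact add_right_cancel hk
          subst hji
          obtain ⟨w, hw, rfl⟩ := hv
          have h1 := h.2.1 j w hw.1
          have h2 := h'.2.1 j w hw.2
          exact Submodule.mem_iSup_of_mem ⟨j, rfl⟩ ⟨_, ⟨h1, h2⟩, rfl⟩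
        · simp only [map_zero]
          exact Submodule.zero_mem _
        · intro a b hab hb
          simp only [map_add]
          exact Submodule.add_mem _ hab hb
      hY := by
        intro i v hv
        refine Submodule.iSup_induction
          (motive := fun w => R.Y i w ∈ ⨆ k : {k : ℤ // ((k : ℤ) : ZMod ℓ) = i + 1},
            ((Vg k.1 ⊓ Vg' k.1).map (castMap d k.2))) _ hv ?_ ?_ ?_
        · rintro ⟨k, hk⟩ v hv
          subst hk
          obtain ⟨w, hw, rfl⟩ := hv
          have h1 := h.2.2.1 k w hw.1
          have h2 := h'.2.2.1 k w hw.2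
          exact Submodule.mem_iSup_of_mem
            ⟨k + 1, by push_cast; ring⟩ ⟨_, ⟨h1, h2⟩, rfl⟩
        · simp only [map_zero]
          exact Submodule.zero_mem _
        · intro a b hab hb
          simp only [map_add]
          exact Submodule.add_mem _ hab hb
      hx := by
        intro z _
        have h1 := h.2.2.2.1 z
        have h2 := h'.2.2.2.1 z
        exact Submodule.mem_iSup_of_mem ⟨0, by push_cast; ring⟩ ⟨_, ⟨h1, h2⟩, rfl⟩
      hy := fun v _ => Submodule.mem_top } with hS
  rcases hR S with ⟨_, hbot⟩ | ⟨htop, _⟩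
  · exact absurd hbot (by simp [hS])
  funext j
  refine le_antisymm ?_ ?_
  · refine le_trans ?_
      (le_trans (part_le_of_iSup_top
        (f := fun k : {k : ℤ // ((k : ℤ) : ZMod ℓ) = ((j : ℤ) : ZMod ℓ)} =>
          (Vg k.1).map (castMap d k.2))
        (W := fun k : {k : ℤ // ((k : ℤ) : ZMod ℓ) = ((j : ℤ) : ZMod ℓ)} =>
          ((Vg k.1 ⊓ Vg' k.1).map (castMap d k.2)))
        ((h.1 _).submodule_iSupIndep)
        (fun k => Submodule.map_mono inf_le_left)
        (htop _) ⟨j, rfl⟩) ?_)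
    · intro v hv
      exact ⟨v, hv, rfl⟩
    · rintro v ⟨u, hu, rfl⟩
      exact hu.2
  · refine le_trans ?_
      (le_trans (part_le_of_iSup_top
        (f := fun k : {k : ℤ // ((k : ℤ) : ZMod ℓ) = ((j : ℤ) : ZMod ℓ)} =>
          (Vg' k.1).map (castMap d k.2))
        (W := fun k : {k : ℤ // ((k : ℤ) : ZMod ℓ) = ((j : ℤ) : ZMod ℓ)} =>
          ((Vg k.1 ⊓ Vg' k.1).map (castMap d k.2)))
        ((h'.1 _).submodule_iSupIndep)
        (fun k => Submodule.map_mono inf_le_right)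
        (htop _) ⟨j, rfl⟩) ?_)
    · intro v hv
      exact ⟨v, hv, rfl⟩
    · rintro v ⟨u, hu, rfl⟩
      exact hu.1


end CM
end
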